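/- For r ≥ 2 and t ≥ 2, the mutual-visibility number of the glued t-ary tree GT(r,t) equals t^r + 1, and the number of maximum mutual-visibility sets equals the number of non-quasi-leaf vertices, namely 2·(t^r − 1)/(t − 1). -/

import Mathlib

open SimpleGraph

/-- Two vertices `u` and `v` are `S`-visible: there exists a shortest `u,v`-path
whose intersection with `S` is contained in `{u, v}`. -/
def isVisible {V : Type*} (G : SimpleGraph V) (S : Set V) (u v : V) : Prop :=
  ∃ p : G.Walk u v, p.IsPath ∧ p.length = G.dist u v ∧
    ∀ w ∈ p.support, w ∈ S → w = u ∨ w = v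

/-- Two vertices `u` and `v` are `S`-positionable: every shortest `u,v`-path
has its intersection with `S` contained in `{u, v}`. -/
def isPositionable {V : Type*} (G : SimpleGraph V) (S : Set V) (u v : V) : Prop :=
  ∀ p : G.Walk u v, p.IsPath → p.length = G.dist u v →
    ∀ w ∈ p.support, w ∈ S → w = u ∨ w = v

def isMVSet {V : Type*} (G : SimpleGraph V) (S : Set V) : Prop :=
  ∀ u ∈ S, ∀ v ∈ S, isVisible G S u v

def isOuterMVSet {V : Type*} (G : SimpleGraph V) (S : Set V) : Prop :=
  isMVSet G S ∧ ∀ u ∈ S, ∀ v ∉ S, isVisible G S u v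

def isDualMVSet {V : Type*} (G : SimpleGraph V) (S : Set V) : Prop :=
  isMVSet G S ∧ ∀ u ∉ S, ∀ v ∉ S, isVisible G S u v

def isTotalMVSet {V : Type*} (G : SimpleGraph V) (S : Set V) : Prop :=
  ∀ u v : V, isVisible G S u v

def isGPSet {V : Type*} (G : SimpleGraph V) (S : Set V) : Prop :=
  ∀ u ∈ S, ∀ v ∈ S, isPositionable G S u v

def isOuterGPSet {V : Type*} (G : SimpleGraph V) (S : Set V) : Prop :=
  isGPSet G S ∧ ∀ u ∈ S, ∀ v ∉ S, isPositionable G S u v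

def isDualGPSet {V : Type*} (G : SimpleGraph V) (S : Set V) : Prop :=
  isGPSet G S ∧ ∀ u ∉ S, ∀ v ∉ S, isPositionable G S u v

def isTotalGPSet {V : Type*} (G : SimpleGraph V) (S : Set V) : Prop :=
  ∀ u v : V, isPositionable G S u v

/-- Vertices of the generalized glued `t`-ary tree obtained from `n` copies of
the perfect `t`-ary tree of depth `r`: an internal vertex of copy `i` is encoded
as the list of child-choices from the root (length `< r`), and a quasi-leaf
(identified leaf) is encoded as such a list of length exactly `r`. -/
abbrev gluedVert (r n t : ℕ) : Type :=
  (Fin n × {l : List (Fin t) // l.length < r}) ⊕ {l : List (Fin t) // l.length = r}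

def gluedAdj (r n t : ℕ) : gluedVert r n t → gluedVert r n t → Prop
  | Sum.inl (i, s), Sum.inl (j, s') => i = j ∧ ∃ b, s'.val = s.val ++ [b]
  | Sum.inl (_, s), Sum.inr l => ∃ b, l.val = s.val ++ [b]
  | Sum.inr _, _ => False

/-- The generalized glued `t`-ary tree on `n` copies of the perfect `t`-ary tree
of depth `r`.  `gluedTree r 2 2` is the glued binary tree `GT(r)`,
`gluedTree r 2 t` is the glued `t`-ary tree `GT(r,t)`, and `gluedTree r n 2`
is the generalized glued binary tree `GT_r^(n)`. -/
def gluedTree (r n t : ℕ) : SimpleGraph (gluedVert r n t) :=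
  SimpleGraph.fromRel (gluedAdj r n t)

/-- The set of quasi-leaves. -/
def quasiLeaves (r n t : ℕ) : Set (gluedVert r n t) := {x | ∃ l, x = Sum.inr l}

/-- The vertex set of the `i`-th copy `T_r^(i)` of the perfect `t`-ary tree
(its internal vertices together with all quasi-leaves). -/
def copySet (r n t : ℕ) (i : Fin n) : Set (gluedVert r n t) :=
  {x | (∃ s, x = Sum.inl (i, s)) ∨ x ∈ quasiLeaves r n t}


namespace GTP

def lcp : List (Fin t) → List (Fin t) → ℕ
  | a :: x, b :: y => if a = b then lcp x y + 1 else 0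
  | _, _ => 0

@[simp] lemma lcp_nil_left (y : List (Fin t)) : lcp [] y = 0 := by cases y <;> rfl
@[simp] lemma lcp_nil_right (x : List (Fin t)) : lcp x [] = 0 := by cases x <;> rfl
@[simp] lemma lcp_cons (a b : Fin t) (x y : List (Fin t)) :
    lcp (a :: x) (b :: y) = if a = b then lcp x y + 1 else 0 := rfl

lemma lcp_comm (x y : List (Fin t)) : lcp x y = lcp y x := by
  induction x generalizing y with
  | nil => simp
  | cons a x ih =>
    cases y with
    | nil => simp
    | cons b y => by_cases h : a = b <;> simp [h, ih, eq_comm, Ne.symm]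

lemma lcp_le_left (x y : List (Fin t)) : lcp x y ≤ x.length := by
  induction x generalizing y with
  | nil => simp
  | cons a x ih =>
    cases y with
    | nil => simp
    | cons b y =>
      by_cases h : a = b <;> simp [h]
      exact ih y

lemma lcp_le_right (x y : List (Fin t)) : lcp x y ≤ y.length := by
  rw [lcp_comm]; exact lcp_le_left y x

lemma lcp_self (x : List (Fin t)) : lcp x x = x.length := by
  induction x with
  | nil => simp
  | cons a x ih => simp [ih]

lemma take_lcp_eq (x y : List (Fin t)) : x.take (lcp x y) = y.take (lcp x y) := by
  induction x generalizing y with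
  | nil => simp
  | cons a x ih =>
    cases y with
    | nil => simp
    | cons b y =>
      by_cases h : a = b <;> simp [h]
      exact ih y

lemma lcp_of_prefix (h : x <+: y) : lcp x y = x.length := by
  induction x generalizing y with
  | nil => simp
  | cons a x ih =>
    cases y with
    | nil => simp at h
    | cons b y =>
      rw [List.cons_prefix_cons] at h
      simp [h.1, ih h.2]

lemma prefix_of_lcp (h : lcp x y = x.length) : x <+: y := by
  have h2 := take_lcp_eq x y
  rw [h, List.take_length] at h2
  rw [h2]; exact List.take_prefix _ _

lemma prefix_iff_lcp : x <+: y ↔ lcp x y = x.length :=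
  ⟨lcp_of_prefix, prefix_of_lcp⟩

/-- workhorse: truncating one argument truncates the lcp. -/
lemma lcp_prefix_right (w : List (Fin t)) (h : u <+: v) :
    lcp w u = min (lcp w v) u.length := by
  induction w generalizing u v with
  | nil => simp
  | cons c w ih =>
    cases u with
    | nil => simp
    | cons a u =>
      cases v with
      | nil => simp at h
      | cons b v =>
        rw [List.cons_prefix_cons] at h
        obtain ⟨rfl, h2⟩ := h
        by_cases hc : c = a <;> simp [hc, ih h2]

lemma le_lcp (hx : z <+: x) (hy : z <+: y) : z.length ≤ lcp x y := by
  induction z generalizing x y with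
  | nil => simp
  | cons a z ih =>
    cases x with
    | nil => simp at hx
    | cons b x =>
      cases y with
      | nil => simp at hy
      | cons c y =>
        rw [List.cons_prefix_cons] at hx hy
        obtain ⟨rfl, hx⟩ := hx
        obtain ⟨rfl, hy⟩ := hy
        simpa using ih hx hy

lemma take_eq_take_of_le_lcp (n : ℕ) (h : n ≤ lcp x y) : x.take n = y.take n := by
  have := take_lcp_eq x y
  have h1 : (x.take (lcp x y)).take n = (y.take (lcp x y)).take n := by rw [this]
  simpa [List.take_take, Nat.min_eq_left h] using h1

lemma lcp_concat_le (x y : List (Fin t)) (b : Fin t) : lcp x y ≤ lcp (x ++ [b]) y := by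
  have h1 : (x.take (lcp x y)) <+: (x ++ [b]) :=
    (List.take_prefix _ _).trans (List.prefix_append x [b])
  have h2 : (x.take (lcp x y)) <+: y := by
    rw [take_lcp_eq x y]; exact List.take_prefix _ _
  have := le_lcp h1 h2
  have h3 := lcp_le_left x y
  simpa [Nat.min_eq_left h3] using this

lemma lcp_concat_eq (x y : List (Fin t)) (b : Fin t) (h : ¬ (x ++ [b]) <+: y) :
    lcp (x ++ [b]) y = lcp x y := by
  have h1 := lcp_concat_le x y b
  have h2 : lcp (x ++ [b]) y ≤ x.length + 1 := by
    simpa using lcp_le_left (x ++ [b]) y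
  have h3 : lcp (x ++ [b]) y ≠ x.length + 1 := by
    intro hc
    exact h (prefix_of_lcp (by simpa using hc))
  have h4 : lcp x y = min (lcp ((x ++ [b])) y) x.length := by
    have := lcp_prefix_right y (List.prefix_append x [b])
    rw [lcp_comm y x, lcp_comm y (x ++ [b])] at this; exact this
  have h5 := lcp_le_left x y
  omega

lemma lcp_concat_prefix (x y : List (Fin t)) (b : Fin t) (h : (x ++ [b]) <+: y) :
    lcp (x ++ [b]) y = x.length + 1 := by
  simpa using lcp_of_prefix h

lemma prefix_eq_take (h : x <+: y) : x = y.take x.length := by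
  obtain ⟨z, rfl⟩ := h
  simp

lemma prefix_trans_take (h : x <+: y) (n : ℕ) (hn : x.length ≤ n) : x <+: y.take n :=
  List.prefix_take_iff.2 ⟨h, hn⟩

/-- strict prefix gives next-letter extension -/
lemma exists_concat_prefix (h : x <+: y) (hne : x ≠ y) : ∃ b, (x ++ [b]) <+: y := by
  obtain ⟨z, rfl⟩ := h
  cases z with
  | nil => simp at hne
  | cons b z => exact ⟨b, ⟨z, by simp⟩⟩

lemma lcp_eq_of_branch {y p p' : List (Fin t)} {b b' : Fin t}
    (hb : (y ++ [b]) <+: p) (hb' : (y ++ [b']) <+: p') (hne : b ≠ b') :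
    lcp p p' = y.length := by
  have h1 : y.length ≤ lcp p p' :=
    le_lcp ((List.prefix_append y [b]).trans hb) ((List.prefix_append y [b']).trans hb')
  rcases Nat.lt_or_ge (lcp p p') (y.length + 1) with h | h
  · omega
  · exfalso
    have h2 := take_eq_take_of_le_lcp (x := p) (y := p') (y.length + 1) h
    have h3 : p.take (y.length + 1) = y ++ [b] := by
      have := prefix_eq_take hb
      simpa using this.symm
    have h4 : p'.take (y.length + 1) = y ++ [b'] := by
      have := prefix_eq_take hb'
      simpa using this.symm
    rw [h3, h4] at h2
    simp at h2
    exact hne h2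


/-- tree distance between two nodes encoded by their root-paths -/
def tau (x y : List (Fin t)) : ℕ := x.length + y.length - 2 * lcp x y

variable (r : ℕ)

/-- cross-copy distance between internal vertices of different copies -/
def chi (x y : List (Fin t)) : ℕ :=
  (r - x.length) + (r - y.length) + 2 * (min x.length y.length - lcp x y)

lemma tau_comm (x y : List (Fin t)) : tau x y = tau y x := by
  unfold tau; rw [lcp_comm x y]; omega

@[simp] lemma tau_self (x : List (Fin t)) : tau x x = 0 := by
  unfold tau; rw [lcp_self]; omega

lemma tau_eq_zero_iff (x y : List (Fin t)) : tau x y = 0 ↔ x = y := by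
  constructor
  · intro h
    have h1 := lcp_le_left x y
    have h2 := lcp_le_right x y
    have hx : lcp x y = x.length ∧ x.length = y.length := by
      unfold tau at h; omega
    have := prefix_of_lcp hx.1
    exact this.eq_of_length hx.2
  · rintro rfl; simp

lemma tau_of_prefix (h : x <+: y) : tau x y = y.length - x.length := by
  have h1 := lcp_of_prefix h
  have hl := h.length_le
  unfold tau; rw [h1]; omega

lemma tau_concat_prefix (x y : List (Fin t)) (b : Fin t) (h : (x ++ [b]) <+: y) :
    tau (x ++ [b]) y + 1 = tau x y := by
  have h1 := lcp_concat_prefix x y b h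
  have h2 : lcp x y = x.length := lcp_of_prefix ((List.prefix_append x [b]).trans h)
  have h3 := h.length_le
  simp only [List.length_append, List.length_singleton] at h3
  unfold tau
  rw [h1, h2]
  simp only [List.length_append, List.length_singleton]
  omega

lemma tau_concat_not_prefix (x y : List (Fin t)) (b : Fin t) (h : ¬ (x ++ [b]) <+: y) :
    tau (x ++ [b]) y = tau x y + 1 := by
  have h1 := lcp_concat_eq x y b h
  have h2 := lcp_le_left x y
  have h4 := lcp_le_right x y
  unfold tau
  rw [h1]
  simp only [List.length_append, List.length_singleton]
  omega

lemma chi_concat_up (x y : List (Fin t)) (b : Fin t) (hl : y.length ≤ x.length)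
    (hx : x.length < r) :
    chi r (x ++ [b]) y + 1 = chi r x y := by
  have h1 : lcp (x ++ [b]) y = lcp x y := by
    apply lcp_concat_eq
    intro h
    have := h.length_le
    simp only [List.length_append, List.length_singleton] at this; omega
  have h2 := lcp_le_right x y
  have h3 := lcp_le_left x y
  unfold chi
  rw [h1]
  simp only [List.length_append, List.length_singleton]
  rw [Nat.min_eq_right (by omega), Nat.min_eq_right (by omega)]
  omega

lemma chi_concat_down (x y : List (Fin t)) (b : Fin t) (hx : x.length < r)
    (h : (x ++ [b]) <+: y) : chi r (x ++ [b]) y + 1 = chi r x y := by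
  have h1 := lcp_concat_prefix x y b h
  have h2 : lcp x y = x.length := lcp_of_prefix ((List.prefix_append x [b]).trans h)
  have h3 := h.length_le
  simp only [List.length_append, List.length_singleton] at h3
  unfold chi
  rw [h1, h2]
  simp only [List.length_append, List.length_singleton]
  rw [Nat.min_eq_left (by omega), Nat.min_eq_left (by omega)]
  omega

lemma chi_concat_other (x y : List (Fin t)) (b : Fin t) (hl : x.length < y.length)
    (hx : x.length < r) (h : ¬ (x ++ [b]) <+: y) : chi r (x ++ [b]) y = chi r x y + 1 := by
  have h1 := lcp_concat_eq x y b h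
  have h2 := lcp_le_left x y
  have h4 := lcp_le_right x y
  unfold chi
  rw [h1]
  simp only [List.length_append, List.length_singleton]
  rw [Nat.min_eq_left (by omega), Nat.min_eq_left (by omega)]
  omega

lemma chi_leaf_boundary (x y : List (Fin t)) (b : Fin t) (hx : x.length + 1 = r)
    (hy : y.length < r) : tau (x ++ [b]) y + 1 = chi r x y := by
  have h1 : lcp (x ++ [b]) y = lcp x y := by
    apply lcp_concat_eq
    intro h
    have := h.length_le
    simp only [List.length_append, List.length_singleton] at this; omega
  have h2 := lcp_le_right x y
  have h3 := lcp_le_left x y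
  unfold chi tau
  rw [h1]
  simp only [List.length_append, List.length_singleton]
  rw [Nat.min_eq_right (show y.length ≤ x.length by omega)]
  omega

/-- additivity of tau along tree paths (betweenness) -/
lemma tau_between (s m w : List (Fin t)) (h1 : lcp s m ≤ w.length)
    (h2 : w <+: m ∨ w <+: s) : tau s w + tau w m = tau s m := by
  have hsl := lcp_le_left s m
  have hsr := lcp_le_right s m
  rcases h2 with h2 | h2
  · have ha : lcp s w = min (lcp s m) w.length := lcp_prefix_right s h2
    have hb : lcp w m = w.length := lcp_of_prefix h2
    have hc := h2.length_le
    unfold tau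
    rw [ha, hb, Nat.min_eq_left h1]
    omega
  · have ha : lcp s w = w.length := by rw [lcp_comm]; exact lcp_of_prefix h2
    have hb : lcp w m = min (lcp m s) w.length := by
      have h6 := lcp_prefix_right m h2
      rw [lcp_comm m w] at h6
      exact h6
    rw [lcp_comm m s] at hb
    have hc := h2.length_le
    unfold tau
    rw [ha, hb, Nat.min_eq_left h1]
    omega

/-- betweenness for the leaf-leaf situation: w between (parent of l') and l. -/
lemma tau_between_leaf (l l' w : List (Fin t)) (hr2 : 2 ≤ r) (hll : l.length = r)
    (hl'l : l'.length = r) (hne : l ≠ l') (hw : w.length < r)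
    (h1 : lcp l l' ≤ w.length) (h2 : w <+: l ∨ w <+: l') :
    tau l'.dropLast w + tau w l = tau l'.dropLast l := by
  have hcr : lcp l l' < r := by
    rcases Nat.lt_or_ge (lcp l l') r with h | h
    · exact h
    · exfalso
      have h3 := prefix_of_lcp (x := l) (y := l') (by have := lcp_le_left l l'; omega)
      exact hne (h3.eq_of_length (by omega))
  have hdl : l'.dropLast = l'.take (r - 1) := by rw [List.dropLast_eq_take]; congr 1; omega
  have hdp : l'.dropLast <+: l' := List.dropLast_prefix l'
  have hdll : l'.dropLast.length = r - 1 := by simp [hl'l]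
  have hlcp_dl : lcp l'.dropLast l = lcp l l' := by
    have h6 := lcp_prefix_right l hdp
    rw [lcp_comm l l'.dropLast] at h6
    rw [h6, hdll, Nat.min_eq_left (by omega)]
  rcases h2 with h2 | h2
  · -- w ⊑ l
    have ha : lcp l'.dropLast w = min (lcp l'.dropLast l) w.length := lcp_prefix_right _ h2
    have hb : lcp w l = w.length := lcp_of_prefix h2
    unfold tau
    rw [ha, hb, hlcp_dl, hdll, hll, Nat.min_eq_left h1]
    omega
  · -- w ⊑ l'
    have hwdl : w <+: l'.dropLast := by
      rw [hdl]; exact prefix_trans_take h2 _ (by omega)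
    have ha : lcp l'.dropLast w = w.length := by rw [lcp_comm]; exact lcp_of_prefix hwdl
    have hb : lcp w l = min (lcp l l') w.length := by
      have h6 := lcp_prefix_right l h2
      rw [lcp_comm l w, lcp_comm l l'] at h6
      rw [lcp_comm l l']
      exact h6
    unfold tau
    rw [ha, hb, hlcp_dl, hdll, hll, Nat.min_eq_left h1]
    omega


variable {r t : ℕ}


def dfun : gluedVert r 2 t → gluedVert r 2 t → ℕ
  | Sum.inl (i, s), Sum.inl (j, u) => if i = j then tau s.val u.val else chi r s.val u.val
  | Sum.inl (_, s), Sum.inr l => tau s.val l.val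
  | Sum.inr l, Sum.inl (_, u) => tau l.val u.val
  | Sum.inr l, Sum.inr m => tau l.val m.val

@[simp] lemma dfun_inl_inl (i j : Fin 2) (s u : {l : List (Fin t) // l.length < r}) :
    dfun (Sum.inl (i,s)) (Sum.inl (j,u)) = if i = j then tau s.val u.val else chi r s.val u.val := rfl
@[simp] lemma dfun_inl_inr (i : Fin 2) (s : {l : List (Fin t) // l.length < r}) (l : {l : List (Fin t) // l.length = r}) :
    dfun (Sum.inl (i,s)) (Sum.inr l) = tau s.val l.val := rfl
@[simp] lemma dfun_inr_inl (i : Fin 2) (s : {l : List (Fin t) // l.length < r}) (l : {l : List (Fin t) // l.length = r}) :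
    dfun (Sum.inr l) (Sum.inl (i,s)) = tau l.val s.val := rfl
@[simp] lemma dfun_inr_inr (l m : {l : List (Fin t) // l.length = r}) :
    dfun (Sum.inr l) (Sum.inr m) = tau l.val m.val := rfl

lemma adj_inl_iff {i : Fin 2} {s : {l : List (Fin t) // l.length < r}} {z : gluedVert r 2 t} : (gluedTree r 2 t).Adj (Sum.inl (i,s)) z ↔
    (∃ (u : {l : List (Fin t) // l.length < r}) (b : Fin t), z = Sum.inl (i,u) ∧ (u.val = s.val ++ [b] ∨ s.val = u.val ++ [b])) ∨
    (∃ (l : {l : List (Fin t) // l.length = r}) (b : Fin t), z = Sum.inr l ∧ l.val = s.val ++ [b]) := by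
  rw [gluedTree, SimpleGraph.fromRel_adj]
  constructor
  · rintro ⟨hne, h | h⟩
    · rcases z with ⟨j, u⟩ | l
      · obtain ⟨rfl, b, hb⟩ := h
        exact Or.inl ⟨u, b, rfl, Or.inl hb⟩
      · obtain ⟨b, hb⟩ := h
        exact Or.inr ⟨l, b, rfl, hb⟩
    · rcases z with ⟨j, u⟩ | l
      · obtain ⟨rfl, b, hb⟩ := h
        exact Or.inl ⟨u, b, rfl, Or.inr hb⟩
      · exact absurd h id
  · rintro (⟨u, b, rfl, hb | hb⟩ | ⟨l, b, rfl, hb⟩)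
    · refine ⟨?_, Or.inl ⟨rfl, b, hb⟩⟩
      intro hc
      rw [Sum.inl.injEq, Prod.mk.injEq] at hc
      have := congrArg (List.length ∘ Subtype.val) hc.2
      simp [hb] at this
    · refine ⟨?_, Or.inr ⟨rfl, b, hb⟩⟩
      intro hc
      rw [Sum.inl.injEq, Prod.mk.injEq] at hc
      have := congrArg (List.length ∘ Subtype.val) hc.2
      simp [hb] at this
    · exact ⟨by simp, Or.inl ⟨b, hb⟩⟩

lemma adj_inr_iff {l : {l : List (Fin t) // l.length = r}} {z : gluedVert r 2 t} : (gluedTree r 2 t).Adj (Sum.inr l) z ↔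
    ∃ (i : Fin 2) (u : {l : List (Fin t) // l.length < r}) (b : Fin t), z = Sum.inl (i,u) ∧ l.val = u.val ++ [b] := by
  rw [gluedTree, SimpleGraph.fromRel_adj]
  constructor
  · rintro ⟨hne, h | h⟩
    · exact absurd h id
    · rcases z with ⟨j, u⟩ | m
      · obtain ⟨b, hb⟩ := h
        exact ⟨j, u, b, rfl, hb⟩
      · exact absurd h id
  · rintro ⟨i, u, b, rfl, hb⟩
    exact ⟨by simp, Or.inr ⟨b, hb⟩⟩

lemma parent_decomp {x : List (Fin t)} (h : x ≠ []) : x.dropLast ++ [x.getLast h] = x :=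
  List.dropLast_append_getLast h

lemma dfun_same (i : Fin 2) (s u : {l : List (Fin t) // l.length < r}) :
    dfun (Sum.inl (i,s)) (Sum.inl (i,u)) = tau s.val u.val := by
  simp

lemma dfun_diff {i j : Fin 2} (h : i ≠ j) (s u : {l : List (Fin t) // l.length < r}) :
    dfun (Sum.inl (i,s)) (Sum.inl (j,u)) = chi r s.val u.val := by
  simp [h]

lemma adj_child {i : Fin 2} {s u : {l : List (Fin t) // l.length < r}} {b : Fin t}
    (h : u.val = s.val ++ [b]) : (gluedTree r 2 t).Adj (Sum.inl (i,s)) (Sum.inl (i,u)) :=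
  adj_inl_iff.2 (Or.inl ⟨u, b, rfl, Or.inl h⟩)

lemma adj_parent {i : Fin 2} {s u : {l : List (Fin t) // l.length < r}} {b : Fin t}
    (h : s.val = u.val ++ [b]) : (gluedTree r 2 t).Adj (Sum.inl (i,s)) (Sum.inl (i,u)) :=
  adj_inl_iff.2 (Or.inl ⟨u, b, rfl, Or.inr h⟩)

lemma adj_leafchild {i : Fin 2} {s : {l : List (Fin t) // l.length < r}}
    {l : {l : List (Fin t) // l.length = r}} {b : Fin t}
    (h : l.val = s.val ++ [b]) : (gluedTree r 2 t).Adj (Sum.inl (i,s)) (Sum.inr l) :=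
  adj_inl_iff.2 (Or.inr ⟨l, b, rfl, h⟩)

lemma adj_leafparent {i : Fin 2} {u : {l : List (Fin t) // l.length < r}}
    {l : {l : List (Fin t) // l.length = r}} {b : Fin t}
    (h : l.val = u.val ++ [b]) : (gluedTree r 2 t).Adj (Sum.inr l) (Sum.inl (i,u)) :=
  adj_inr_iff.2 ⟨i, u, b, rfl, h⟩

/-- Lipschitz: every edge changes dfun to any target by exactly one. -/
lemma dfun_step {x z : gluedVert r 2 t} (y : gluedVert r 2 t)
    (h : (gluedTree r 2 t).Adj x z) :
    dfun x y + 1 = dfun z y ∨ dfun z y + 1 = dfun x y := by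
  rcases x with ⟨i, s⟩ | l
  · rcases (adj_inl_iff.1 h) with ⟨u, b, rfl, hb | hb⟩ | ⟨l, b, rfl, hb⟩
    · -- z = inl (i,u), child: u = s ++ [b]
      rcases y with ⟨j, w⟩ | m
      · by_cases hij : i = j
        · subst hij
          rw [dfun_same, dfun_same, hb]
          by_cases hp : (s.val ++ [b]) <+: w.val
          · exact Or.inr (tau_concat_prefix _ _ _ hp)
          · exact Or.inl (by rw [tau_concat_not_prefix _ _ _ hp])
        · rw [dfun_diff hij, dfun_diff hij, hb]
          rcases Nat.lt_or_ge s.val.length w.val.length with hlen | hlen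
          · by_cases hp : (s.val ++ [b]) <+: w.val
            · exact Or.inr (chi_concat_down r _ _ _ s.2 hp)
            · exact Or.inl (by rw [chi_concat_other r _ _ _ hlen s.2 hp])
          · exact Or.inr (chi_concat_up r _ _ _ hlen s.2)
      · simp only [dfun_inl_inr]
        rw [hb]
        by_cases hp : (s.val ++ [b]) <+: m.val
        · exact Or.inr (tau_concat_prefix _ _ _ hp)
        · exact Or.inl (by rw [tau_concat_not_prefix _ _ _ hp])
    · -- z = inl (i,u), parent: s = u ++ [b]
      rcases y with ⟨j, w⟩ | m
      · by_cases hij : i = j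
        · subst hij
          rw [dfun_same, dfun_same, hb]
          by_cases hp : (u.val ++ [b]) <+: w.val
          · exact Or.inl (tau_concat_prefix _ _ _ hp)
          · exact Or.inr (by rw [tau_concat_not_prefix _ _ _ hp])
        · rw [dfun_diff hij, dfun_diff hij, hb]
          rcases Nat.lt_or_ge u.val.length w.val.length with hlen | hlen
          · by_cases hp : (u.val ++ [b]) <+: w.val
            · exact Or.inl (chi_concat_down r _ _ _ u.2 hp)
            · exact Or.inr (by rw [chi_concat_other r _ _ _ hlen u.2 hp])
          · exact Or.inl (chi_concat_up r _ _ _ hlen u.2)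
      · simp only [dfun_inl_inr]
        rw [hb]
        by_cases hp : (u.val ++ [b]) <+: m.val
        · exact Or.inl (tau_concat_prefix _ _ _ hp)
        · exact Or.inr (by rw [tau_concat_not_prefix _ _ _ hp])
    · -- z = inr l, l = s ++ [b]
      have hsr : s.val.length + 1 = r := by
        have h2 := l.2
        rw [hb] at h2
        simpa using h2
      rcases y with ⟨j, w⟩ | m
      · by_cases hij : i = j
        · subst hij
          rw [dfun_same]
          simp only [dfun_inr_inl]
          rw [hb]
          by_cases hp : (s.val ++ [b]) <+: w.val
          · exact Or.inr (tau_concat_prefix _ _ _ hp)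
          · exact Or.inl (by rw [tau_concat_not_prefix _ _ _ hp])
        · rw [dfun_diff hij]
          simp only [dfun_inr_inl]
          rw [hb]
          exact Or.inr (chi_leaf_boundary r _ _ _ hsr w.2)
      · simp only [dfun_inl_inr, dfun_inr_inr]
        rw [hb]
        by_cases hp : (s.val ++ [b]) <+: m.val
        · exact Or.inr (tau_concat_prefix _ _ _ hp)
        · exact Or.inl (by rw [tau_concat_not_prefix _ _ _ hp])
  · -- x = inr l
    obtain ⟨i, u, b, rfl, hb⟩ := adj_inr_iff.1 h
    have hur : u.val.length + 1 = r := by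
      have h2 := l.2; rw [hb] at h2; simpa using h2
    rcases y with ⟨j, w⟩ | m
    · by_cases hij : i = j
      · subst hij
        rw [dfun_same]
        simp only [dfun_inr_inl]
        rw [hb]
        by_cases hp : (u.val ++ [b]) <+: w.val
        · exact Or.inl (tau_concat_prefix _ _ _ hp)
        · exact Or.inr (by rw [tau_concat_not_prefix _ _ _ hp])
      · rw [dfun_diff hij]
        simp only [dfun_inr_inl]
        rw [hb]
        exact Or.inl (chi_leaf_boundary r _ _ _ hur w.2)
    · simp only [dfun_inl_inr, dfun_inr_inr]
      rw [hb]
      by_cases hp : (u.val ++ [b]) <+: m.val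
      · exact Or.inl (tau_concat_prefix _ _ _ hp)
      · exact Or.inr (by rw [tau_concat_not_prefix _ _ _ hp])

@[simp] lemma dfun_self (x : gluedVert r 2 t) : dfun x x = 0 := by
  rcases x with ⟨i, s⟩ | l <;> simp

lemma dfun_eq_zero_iff {x y : gluedVert r 2 t} : dfun x y = 0 ↔ x = y := by
  constructor
  · intro h
    rcases x with ⟨i, s⟩ | l <;> rcases y with ⟨j, u⟩ | m
    · by_cases hij : i = j
      · subst hij
        rw [dfun_same, tau_eq_zero_iff] at h
        rw [Sum.inl.injEq, Prod.mk.injEq]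
        exact ⟨rfl, Subtype.ext h⟩
      · exfalso
        rw [dfun_diff hij] at h
        unfold chi at h
        have := s.2
        omega
    · exfalso
      simp only [dfun_inl_inr] at h
      rw [tau_eq_zero_iff] at h
      have h3 := s.2
      have h4 := m.2
      rw [h] at h3
      omega
    · exfalso
      simp only [dfun_inr_inl] at h
      rw [tau_eq_zero_iff] at h
      have h3 := l.2
      have h4 := u.2
      rw [h] at h3
      omega
    · simp only [dfun_inr_inr] at h
      rw [tau_eq_zero_iff] at h
      rw [Sum.inr.injEq]
      exact Subtype.ext h
  · rintro rfl; simp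

lemma exists_decreasing (ht : 0 < t) {x y : gluedVert r 2 t} (hne : x ≠ y) :
    ∃ z : gluedVert r 2 t, (gluedTree r 2 t).Adj x z ∧ dfun z y + 1 = dfun x y := by
  rcases x with ⟨i, s⟩ | l
  · rcases y with ⟨j, u⟩ | m
    · by_cases hij : i = j
      · subst hij
        have hsu : s ≠ u := fun hc => hne (by rw [hc])
        have hsuv : s.val ≠ u.val := fun hc => hsu (Subtype.ext hc)
        by_cases hp : s.val <+: u.val
        · obtain ⟨b, hb⟩ := exists_concat_prefix hp hsuv
          have hlen : s.val.length + 1 ≤ u.val.length := by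
            have := hb.length_le; simpa using this
          have hlr : (s.val ++ [b]).length < r := by
            have := u.2; simp; omega
          refine ⟨Sum.inl (i, ⟨s.val ++ [b], hlr⟩), adj_child rfl, ?_⟩
          rw [dfun_same, dfun_same]
          exact tau_concat_prefix _ _ _ hb
        · have hs0 : s.val ≠ [] := fun hc => hp (hc ▸ List.nil_prefix)
          have hlr : s.val.dropLast.length < r := by
            have := s.2; have := List.length_dropLast (xs := s.val); omega
          refine ⟨Sum.inl (i, ⟨s.val.dropLast, hlr⟩),
            adj_parent (b := s.val.getLast hs0) (parent_decomp hs0).symm, ?_⟩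
          rw [dfun_same, dfun_same]
          show tau s.val.dropLast u.val + 1 = tau s.val u.val
          have h5 := tau_concat_not_prefix s.val.dropLast u.val (s.val.getLast hs0)
            (by rw [parent_decomp hs0]; exact hp)
          rw [parent_decomp hs0] at h5
          omega
      · rcases Nat.lt_or_ge s.val.length u.val.length with hlen | hlen
        · by_cases hp : s.val <+: u.val
          · obtain ⟨b, hb⟩ := exists_concat_prefix hp (by intro hc; rw [hc] at hlen; omega)
            have hl2 : s.val.length + 1 ≤ u.val.length := by
              have := hb.length_le; simpa using this
            have hlr : (s.val ++ [b]).length < r := by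
              have := u.2; simp; omega
            refine ⟨Sum.inl (i, ⟨s.val ++ [b], hlr⟩), adj_child rfl, ?_⟩
            rw [dfun_diff hij, dfun_diff hij]
            exact chi_concat_down r _ _ _ s.2 hb
          · have hs0 : s.val ≠ [] := fun hc => hp (hc ▸ List.nil_prefix)
            have hlr : s.val.dropLast.length < r := by
              have := s.2; have := List.length_dropLast (xs := s.val); omega
            refine ⟨Sum.inl (i, ⟨s.val.dropLast, hlr⟩),
              adj_parent (b := s.val.getLast hs0) (parent_decomp hs0).symm, ?_⟩
            rw [dfun_diff hij, dfun_diff hij]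
            show chi r s.val.dropLast u.val + 1 = chi r s.val u.val
            have hlen3 : s.val.dropLast.length < u.val.length := by
              have := List.length_dropLast (xs := s.val); omega
            have h5 := chi_concat_other r s.val.dropLast u.val (s.val.getLast hs0) hlen3
              (by have := s.2; have := List.length_dropLast (xs := s.val); omega)
              (by rw [parent_decomp hs0]; exact hp)
            rw [parent_decomp hs0] at h5
            omega
        · by_cases h2 : s.val.length + 1 < r
          · refine ⟨Sum.inl (i, ⟨s.val ++ [⟨0, ht⟩], by simp; omega⟩), adj_child rfl, ?_⟩
            rw [dfun_diff hij, dfun_diff hij]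
            exact chi_concat_up r _ _ _ hlen s.2
          · have hsr : s.val.length + 1 = r := by have := s.2; omega
            refine ⟨Sum.inr ⟨s.val ++ [⟨0, ht⟩], by simp; omega⟩, adj_leafchild rfl, ?_⟩
            rw [dfun_diff hij]
            simp only [dfun_inr_inl]
            exact chi_leaf_boundary r _ _ _ hsr u.2
    · -- y = inr m
      by_cases hp : s.val <+: m.val
      · have hsm : s.val ≠ m.val := by
          intro hc; have h3 := s.2; have h4 := m.2; rw [hc] at h3; omega
        obtain ⟨b, hb⟩ := exists_concat_prefix hp hsm
        have hl2 : s.val.length + 1 ≤ m.val.length := by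
          have := hb.length_le; simpa using this
        by_cases h2 : s.val.length + 1 < r
        · refine ⟨Sum.inl (i, ⟨s.val ++ [b], by simp; omega⟩), adj_child rfl, ?_⟩
          show tau (s.val ++ [b]) m.val + 1 = tau s.val m.val
          exact tau_concat_prefix _ _ _ hb
        · have hsr : (s.val ++ [b]).length = r := by have := s.2; simp; omega
          refine ⟨Sum.inr ⟨s.val ++ [b], hsr⟩, adj_leafchild rfl, ?_⟩
          simp only [dfun_inr_inr, dfun_inl_inr]
          exact tau_concat_prefix _ _ _ hb
      · have hs0 : s.val ≠ [] := fun hc => hp (hc ▸ List.nil_prefix)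
        have hlr : s.val.dropLast.length < r := by
          have := s.2; have := List.length_dropLast (xs := s.val); omega
        refine ⟨Sum.inl (i, ⟨s.val.dropLast, hlr⟩),
          adj_parent (b := s.val.getLast hs0) (parent_decomp hs0).symm, ?_⟩
        show tau s.val.dropLast m.val + 1 = tau s.val m.val
        have h5 := tau_concat_not_prefix s.val.dropLast m.val (s.val.getLast hs0)
          (by rw [parent_decomp hs0]; exact hp)
        rw [parent_decomp hs0] at h5
        omega
  · -- x = inr l
    have hl0 : l.val ≠ [] := by
      rcases y with ⟨j, u⟩ | m
      · intro hc
        have h1 := l.2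
        rw [hc] at h1
        simp at h1
        have h2 := u.2
        omega
      · intro hc
        have h1 := l.2
        have h2 := m.2
        rw [hc] at h1
        simp at h1
        apply hne
        rw [Sum.inr.injEq]
        apply Subtype.ext
        rw [hc]
        symm
        exact List.length_eq_zero_iff.1 (by omega)
    have hdl : l.val.dropLast.length < r := by
      have h1 := l.2
      have h2 := List.length_dropLast (xs := l.val)
      have h3 : l.val.length ≠ 0 := fun hc => hl0 (List.length_eq_zero_iff.1 hc)
      omega
    rcases y with ⟨j, u⟩ | m
    · refine ⟨Sum.inl (j, ⟨l.val.dropLast, hdl⟩),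
        adj_leafparent (b := l.val.getLast hl0) (parent_decomp hl0).symm, ?_⟩
      rw [dfun_same]
      show tau l.val.dropLast u.val + 1 = tau l.val u.val
      have hnp : ¬ (l.val.dropLast ++ [l.val.getLast hl0]) <+: u.val := by
        rw [parent_decomp hl0]
        intro hc
        have h1 := hc.length_le
        have h2 := l.2; have h3 := u.2
        omega
      have h5 := tau_concat_not_prefix l.val.dropLast u.val (l.val.getLast hl0) hnp
      rw [parent_decomp hl0] at h5
      omega
    · have hlm : l.val ≠ m.val := fun hc => hne (by rw [Sum.inr.injEq]; exact Subtype.ext hc)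
      refine ⟨Sum.inl (0, ⟨l.val.dropLast, hdl⟩),
        adj_leafparent (b := l.val.getLast hl0) (parent_decomp hl0).symm, ?_⟩
      show tau l.val.dropLast m.val + 1 = tau l.val m.val
      have hnp : ¬ (l.val.dropLast ++ [l.val.getLast hl0]) <+: m.val := by
        rw [parent_decomp hl0]
        intro hc
        have h1 := l.2; have h2 := m.2
        exact hlm (hc.eq_of_length (by omega))
      have h5 := tau_concat_not_prefix l.val.dropLast m.val (l.val.getLast hl0) hnp
      rw [parent_decomp hl0] at h5
      omega

lemma dfun_le_length {x y : gluedVert r 2 t} (p : (gluedTree r 2 t).Walk x y) :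
    dfun x y ≤ p.length := by
  induction p with
  | nil => simp
  | cons h q ih =>
    rename_i a b c
    rcases dfun_step c h with h1 | h1 <;> simp only [SimpleGraph.Walk.length_cons] <;> omega

lemma exists_walk_dfun_aux (ht : 0 < t) (y : gluedVert r 2 t) : ∀ (n : ℕ) (x : gluedVert r 2 t),
    dfun x y = n → ∃ p : (gluedTree r 2 t).Walk x y, p.length = dfun x y := by
  intro n
  induction n using Nat.strong_induction_on with
  | _ n ih =>
    intro x hn
    by_cases hxy : x = y
    · subst hxy
      exact ⟨SimpleGraph.Walk.nil, by simp⟩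
    · obtain ⟨z, hadj, hz⟩ := exists_decreasing ht hxy
      obtain ⟨q, hq⟩ := ih (dfun z y) (by omega) z rfl
      exact ⟨SimpleGraph.Walk.cons hadj q, by simp [hq]; omega⟩

lemma exists_walk_dfun (ht : 0 < t) (x y : gluedVert r 2 t) :
    ∃ p : (gluedTree r 2 t).Walk x y, p.length = dfun x y :=
  exists_walk_dfun_aux ht y (dfun x y) x rfl

lemma dist_eq_dfun (ht : 0 < t) (x y : gluedVert r 2 t) :
    (gluedTree r 2 t).dist x y = dfun x y := by
  obtain ⟨p, hp⟩ := exists_walk_dfun ht x y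
  apply Nat.le_antisymm
  · rw [← hp]; exact SimpleGraph.dist_le p
  · obtain ⟨q, hq⟩ := (p.reachable).exists_walk_length_eq_dist
    rw [← hq]
    exact dfun_le_length q


/-- on a tight walk, the first step decreases dfun and the rest is tight -/
lemma tight_first_step {x z y : gluedVert r 2 t} (hadj : (gluedTree r 2 t).Adj x z)
    (p' : (gluedTree r 2 t).Walk z y) (hlen : p'.length + 1 = dfun x y) :
    dfun z y = p'.length := by
  have h1 := dfun_le_length p'
  rcases dfun_step y hadj with h2 | h2 <;> omega

/-- unique decreasing step towards a leaf target -/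
lemma step_leaf_shape {i : Fin 2} {s : {l : List (Fin t) // l.length < r}}
    {m : {l : List (Fin t) // l.length = r}} {z : gluedVert r 2 t}
    (hadj : (gluedTree r 2 t).Adj (Sum.inl (i,s)) z)
    (hdec : dfun z (Sum.inr m) < dfun (Sum.inl (i,s)) (Sum.inr m)) :
    (∃ u : {l : List (Fin t) // l.length < r}, z = Sum.inl (i,u) ∧
      u.val = (if s.val <+: m.val then m.val.take (s.val.length+1) else s.val.dropLast)) ∨
    (z = Sum.inr m ∧ s.val <+: m.val ∧ s.val.length + 1 = r) := by
  rcases (adj_inl_iff.1 hadj) with ⟨u, b, rfl, hb | hb⟩ | ⟨l, b, rfl, hb⟩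
  · -- child
    simp only [dfun_inl_inr] at hdec
    rw [hb] at hdec
    by_cases hp : (s.val ++ [b]) <+: m.val
    · have hsp : s.val <+: m.val := (List.prefix_append s.val [b]).trans hp
      refine Or.inl ⟨u, rfl, ?_⟩
      rw [if_pos hsp, hb]
      have := prefix_eq_take hp
      simpa using this
    · exfalso
      have := tau_concat_not_prefix s.val m.val b hp
      omega
  · -- parent
    simp only [dfun_inl_inr] at hdec
    by_cases hp : s.val <+: m.val
    · exfalso
      have h2 : (u.val ++ [b]) <+: m.val := hb ▸ hp
      have := tau_concat_prefix u.val m.val b h2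
      rw [← hb] at this
      omega
    · refine Or.inl ⟨u, rfl, ?_⟩
      rw [if_neg hp, hb, List.dropLast_concat]
  · -- leaf child
    simp only [dfun_inr_inr, dfun_inl_inr] at hdec
    rw [hb] at hdec
    by_cases hp : (s.val ++ [b]) <+: m.val
    · have hlm : l.val = m.val := by
        rw [hb]
        apply hp.eq_of_length
        have := l.2; have := m.2
        rw [← hb]; omega
      have hsr : s.val.length + 1 = r := by
        have := l.2; rw [hb] at this; simpa using this
      exact Or.inr ⟨by rw [Sum.inr.injEq]; exact Subtype.ext hlm,
        (List.prefix_append s.val [b]).trans (hlm ▸ hb ▸ List.prefix_refl _), hsr⟩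
    · exfalso
      have := tau_concat_not_prefix s.val m.val b hp
      omega

/-- unique decreasing step towards a same-copy internal target -/
lemma step_int_shape {i : Fin 2} {s u : {l : List (Fin t) // l.length < r}}
    {z : gluedVert r 2 t}
    (hadj : (gluedTree r 2 t).Adj (Sum.inl (i,s)) z)
    (hdec : dfun z (Sum.inl (i,u)) < dfun (Sum.inl (i,s)) (Sum.inl (i,u))) :
    ∃ w : {l : List (Fin t) // l.length < r}, z = Sum.inl (i,w) ∧
      w.val = (if s.val <+: u.val then u.val.take (s.val.length+1) else s.val.dropLast) := by
  rcases (adj_inl_iff.1 hadj) with ⟨w, b, rfl, hb | hb⟩ | ⟨l, b, rfl, hb⟩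
  · -- child
    rw [dfun_same, dfun_same] at hdec
    rw [hb] at hdec
    by_cases hp : (s.val ++ [b]) <+: u.val
    · have hsp : s.val <+: u.val := (List.prefix_append s.val [b]).trans hp
      refine ⟨w, rfl, ?_⟩
      rw [if_pos hsp, hb]
      have := prefix_eq_take hp
      simpa using this
    · exfalso
      have := tau_concat_not_prefix s.val u.val b hp
      omega
  · -- parent
    rw [dfun_same, dfun_same] at hdec
    by_cases hp : s.val <+: u.val
    · exfalso
      have h2 : (w.val ++ [b]) <+: u.val := hb ▸ hp
      have := tau_concat_prefix w.val u.val b h2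
      rw [← hb] at this
      omega
    · refine ⟨w, rfl, ?_⟩
      rw [if_neg hp, hb, List.dropLast_concat]
  · -- leaf child: impossible (cannot decrease)
    exfalso
    rw [dfun_same] at hdec
    simp only [dfun_inr_inl] at hdec
    rw [hb] at hdec
    by_cases hp : (s.val ++ [b]) <+: u.val
    · have h1 := hp.length_le
      have h2 := l.2
      rw [hb] at h2
      have h3 := u.2
      simp only [List.length_append, List.length_singleton] at h1 h2
      omega
    · have := tau_concat_not_prefix s.val u.val b hp
      omega

/-- all tight walks from an internal vertex to a leaf coincide -/
lemma tight_unique_leaf : ∀ (n : ℕ) (i : Fin 2) (s : {l : List (Fin t) // l.length < r})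
    (m : {l : List (Fin t) // l.length = r})
    (p q : (gluedTree r 2 t).Walk (Sum.inl (i,s)) (Sum.inr m)),
    p.length = n → q.length = n → p.length = dfun (Sum.inl (i,s)) (Sum.inr m) → p = q := by
  intro n
  induction n using Nat.strong_induction_on with
  | _ n ih =>
    intro i s m p q hp hq htight
    have hnd : n = dfun (Sum.inl (i,s)) (Sum.inr m) := by rw [← hp, htight]
    cases p with
    | cons hadj1 p' =>
      cases q with
      | cons hadj2 q' =>
        rename_i z1 z2
        have hp' : p'.length + 1 = dfun (Sum.inl (i,s)) (Sum.inr m) := by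
          rw [SimpleGraph.Walk.length_cons] at hp
          omega
        have hq' : q'.length + 1 = dfun (Sum.inl (i,s)) (Sum.inr m) := by
          rw [SimpleGraph.Walk.length_cons] at hq
          omega
        have hd1 := tight_first_step hadj1 p' hp'
        have hd2 := tight_first_step hadj2 q' hq'
        have hdec1 : dfun z1 (Sum.inr m) < dfun (Sum.inl (i,s)) (Sum.inr m) := by omega
        have hdec2 : dfun z2 (Sum.inr m) < dfun (Sum.inl (i,s)) (Sum.inr m) := by omega
        have hs1 := step_leaf_shape hadj1 hdec1
        have hs2 := step_leaf_shape hadj2 hdec2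
        rcases hs1 with ⟨u1, rfl, hu1⟩ | ⟨rfl, hpre, hlen⟩
        · rcases hs2 with ⟨u2, rfl, hu2⟩ | ⟨rfl, hpre, hlen⟩
          · have : u1 = u2 := Subtype.ext (by rw [hu1, hu2])
            subst this
            have heq := ih p'.length (by omega) i u1 m p' q' rfl (by omega) (by omega)
            rw [heq]
          · exfalso
            rw [if_pos hpre] at hu1
            have h1 := u1.2
            rw [hu1] at h1
            rw [List.length_take] at h1
            have := m.2
            omega
        · rcases hs2 with ⟨u2, rfl, hu2⟩ | ⟨rfl, hpre2, hlen2⟩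
          · exfalso
            rw [if_pos hpre] at hu2
            have h1 := u2.2
            rw [hu2] at h1
            rw [List.length_take] at h1
            have := m.2
            omega
          · -- both z = inr m ; p' q' have length 0
            have hz : dfun (Sum.inr m) (Sum.inr m) = 0 := dfun_self _
            have hp0 : p'.length = 0 := by omega
            have hq0 : q'.length = 0 := by omega
            have : p' = SimpleGraph.Walk.nil := by
              cases p' with
              | nil => rfl
              | cons h w => simp at hp0
            subst this
            have : q' = SimpleGraph.Walk.nil := by
              cases q' with
              | nil => rfl
              | cons h w => simp at hq0
            subst this
            rfl

/-- tight walks to a leaf stay inside the copy (plus the target leaf) -/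
lemma tight_support_leaf : ∀ (n : ℕ) (i : Fin 2) (s : {l : List (Fin t) // l.length < r})
    (m : {l : List (Fin t) // l.length = r})
    (p : (gluedTree r 2 t).Walk (Sum.inl (i,s)) (Sum.inr m)),
    p.length = n → p.length = dfun (Sum.inl (i,s)) (Sum.inr m) →
    ∀ z ∈ p.support, (∃ u : {l : List (Fin t) // l.length < r}, z = Sum.inl (i,u)) ∨ z = Sum.inr m := by
  intro n
  induction n using Nat.strong_induction_on with
  | _ n ih =>
    intro i s m p hp htight z hz
    have hnd : n = dfun (Sum.inl (i,s)) (Sum.inr m) := by rw [← hp, htight]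
    cases p with
    | cons hadj1 p' =>
      rename_i z1
      have hp' : p'.length + 1 = dfun (Sum.inl (i,s)) (Sum.inr m) := by
        rw [SimpleGraph.Walk.length_cons] at hp
        omega
      have hd1 := tight_first_step hadj1 p' hp'
      have hdec1 : dfun z1 (Sum.inr m) < dfun (Sum.inl (i,s)) (Sum.inr m) := by omega
      rw [SimpleGraph.Walk.support_cons] at hz
      rcases List.mem_cons.1 hz with rfl | hz'
      · exact Or.inl ⟨s, rfl⟩
      · rcases step_leaf_shape hadj1 hdec1 with ⟨u1, rfl, hu1⟩ | ⟨rfl, hpre, hlen⟩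
        · exact ih p'.length (by omega) i u1 m p' rfl (by omega) z hz'
        · have hz0 : dfun (Sum.inr m) (Sum.inr m) = 0 := dfun_self _
          have hp0 : p'.length = 0 := by omega
          have : p' = SimpleGraph.Walk.nil := by
            cases p' with
            | nil => rfl
            | cons h w => simp at hp0
          subst this
          simp at hz'
          exact Or.inr hz'

/-- tight walks between same-copy internal vertices coincide and stay in the copy -/
lemma tight_unique_int : ∀ (n : ℕ) (i : Fin 2) (s u : {l : List (Fin t) // l.length < r})
    (p q : (gluedTree r 2 t).Walk (Sum.inl (i,s)) (Sum.inl (i,u))),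
    p.length = n → q.length = n → p.length = dfun (Sum.inl (i,s)) (Sum.inl (i,u)) → p = q := by
  intro n
  induction n using Nat.strong_induction_on with
  | _ n ih =>
    intro i s u p q hp hq htight
    have hnd : n = dfun (Sum.inl (i,s)) (Sum.inl (i,u)) := by rw [← hp, htight]
    by_cases hsu : s = u
    · subst hsu
      have h0 : dfun (Sum.inl (i,s)) (Sum.inl (i,s)) = 0 := dfun_self _
      have hp0 : p.length = 0 := by omega
      have hq0 : q.length = 0 := by omega
      have h1 : p = SimpleGraph.Walk.nil := (SimpleGraph.Walk.nil_iff_length_eq.2 hp0).eq_nil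
      have h2 : q = SimpleGraph.Walk.nil := (SimpleGraph.Walk.nil_iff_length_eq.2 hq0).eq_nil
      rw [h1, h2]
    · have hne : (Sum.inl (i,s) : gluedVert r 2 t) ≠ Sum.inl (i,u) := by
        intro hc
        rw [Sum.inl.injEq, Prod.mk.injEq] at hc
        exact hsu hc.2
      have hdpos : 0 < dfun (Sum.inl (i,s)) (Sum.inl (i,u)) := by
        rcases Nat.eq_zero_or_pos (dfun (Sum.inl (i,s)) (Sum.inl (i,u))) with h | h
        · exact absurd (dfun_eq_zero_iff.1 h) hne
        · exact h
      cases p with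
      | nil =>
        exfalso
        exact hsu rfl
      | cons hadj1 p' =>
        cases q with
        | nil =>
          exfalso
          exact hsu rfl
        | cons hadj2 q' =>
          rename_i z1 z2
          have hp' : p'.length + 1 = dfun (Sum.inl (i,s)) (Sum.inl (i,u)) := by
            rw [SimpleGraph.Walk.length_cons] at hp
            omega
          have hq' : q'.length + 1 = dfun (Sum.inl (i,s)) (Sum.inl (i,u)) := by
            rw [SimpleGraph.Walk.length_cons] at hq
            omega
          have hd1 := tight_first_step hadj1 p' hp'
          have hd2 := tight_first_step hadj2 q' hq'
          obtain ⟨w1, rfl, hw1⟩ := step_int_shape (u := u) hadj1 (by omega)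
          obtain ⟨w2, rfl, hw2⟩ := step_int_shape (u := u) hadj2 (by omega)
          have : w1 = w2 := Subtype.ext (by rw [hw1, hw2])
          subst this
          have heq := ih p'.length (by omega) i w1 u p' q' rfl (by omega) (by omega)
          rw [heq]

lemma tight_support_int : ∀ (n : ℕ) (i : Fin 2) (s u : {l : List (Fin t) // l.length < r})
    (p : (gluedTree r 2 t).Walk (Sum.inl (i,s)) (Sum.inl (i,u))),
    p.length = n → p.length = dfun (Sum.inl (i,s)) (Sum.inl (i,u)) →
    ∀ z ∈ p.support, ∃ w : {l : List (Fin t) // l.length < r}, z = Sum.inl (i,w) := by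
  intro n
  induction n using Nat.strong_induction_on with
  | _ n ih =>
    intro i s u p hp htight z hz
    have hnd : n = dfun (Sum.inl (i,s)) (Sum.inl (i,u)) := by rw [← hp, htight]
    cases p with
    | nil =>
      simp at hz
      exact ⟨s, hz⟩
    | cons hadj1 p' =>
      rename_i z1
      have hp' : p'.length + 1 = dfun (Sum.inl (i,s)) (Sum.inl (i,u)) := by
        rw [SimpleGraph.Walk.length_cons] at hp
        omega
      have hd1 := tight_first_step hadj1 p' hp'
      rw [SimpleGraph.Walk.support_cons] at hz
      rcases List.mem_cons.1 hz with rfl | hz'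
      · exact ⟨s, rfl⟩
      · obtain ⟨w1, rfl, hw1⟩ := step_int_shape (u := u) hadj1 (by omega)
        exact ih p'.length (by omega) i w1 u p' rfl (by omega) z hz'

/-- a vertex metrically between x and a leaf target lies on every tight walk -/
lemma between_mem_tight_leaf (ht : 0 < t) {i : Fin 2} {s : {l : List (Fin t) // l.length < r}}
    {m : {l : List (Fin t) // l.length = r}} {w : gluedVert r 2 t}
    (hbet : dfun (Sum.inl (i,s)) w + dfun w (Sum.inr m) = dfun (Sum.inl (i,s)) (Sum.inr m))
    (p : (gluedTree r 2 t).Walk (Sum.inl (i,s)) (Sum.inr m))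
    (htight : p.length = dfun (Sum.inl (i,s)) (Sum.inr m)) : w ∈ p.support := by
  obtain ⟨p1, hp1⟩ := exists_walk_dfun ht (Sum.inl (i,s)) w
  obtain ⟨p2, hp2⟩ := exists_walk_dfun ht w (Sum.inr m)
  have hglue : (p1.append p2).length = dfun (Sum.inl (i,s)) (Sum.inr m) := by
    rw [SimpleGraph.Walk.length_append, hp1, hp2, hbet]
  have := tight_unique_leaf p.length i s m p (p1.append p2) rfl (by omega) htight
  rw [this]
  rw [SimpleGraph.Walk.mem_support_append_iff]
  exact Or.inl (SimpleGraph.Walk.end_mem_support p1)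

lemma between_mem_tight_int (ht : 0 < t) {i : Fin 2} {s u : {l : List (Fin t) // l.length < r}}
    {w : gluedVert r 2 t}
    (hbet : dfun (Sum.inl (i,s)) w + dfun w (Sum.inl (i,u)) = dfun (Sum.inl (i,s)) (Sum.inl (i,u)))
    (p : (gluedTree r 2 t).Walk (Sum.inl (i,s)) (Sum.inl (i,u)))
    (htight : p.length = dfun (Sum.inl (i,s)) (Sum.inl (i,u))) : w ∈ p.support := by
  obtain ⟨p1, hp1⟩ := exists_walk_dfun ht (Sum.inl (i,s)) w
  obtain ⟨p2, hp2⟩ := exists_walk_dfun ht w (Sum.inl (i,u))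
  have hglue : (p1.append p2).length = dfun (Sum.inl (i,s)) (Sum.inl (i,u)) := by
    rw [SimpleGraph.Walk.length_append, hp1, hp2, hbet]
  have := tight_unique_int p.length i s u p (p1.append p2) rfl (by omega) htight
  rw [this]
  rw [SimpleGraph.Walk.mem_support_append_iff]
  exact Or.inl (SimpleGraph.Walk.end_mem_support p1)

/-- decomposition of a tight leaf-to-leaf walk: it enters one of the two copies -/
lemma tight_leaf_leaf_decomp {l m : {l : List (Fin t) // l.length = r}}
    (p : (gluedTree r 2 t).Walk (Sum.inr l) (Sum.inr m))
    (hne : l ≠ m) (htight : p.length = dfun (Sum.inr l) (Sum.inr m)) :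
    ∃ (i : Fin 2) (u : {l : List (Fin t) // l.length < r}) (b : Fin t)
      (hadj : (gluedTree r 2 t).Adj (Sum.inr l) (Sum.inl (i,u)))
      (q : (gluedTree r 2 t).Walk (Sum.inl (i,u)) (Sum.inr m)),
      l.val = u.val ++ [b] ∧ p = SimpleGraph.Walk.cons hadj q ∧
      q.length = dfun (Sum.inl (i,u)) (Sum.inr m) := by
  have hdpos : 0 < dfun (Sum.inr l) (Sum.inr m) := by
    rcases Nat.eq_zero_or_pos (dfun (Sum.inr l) (Sum.inr m)) with h | h
    · exfalso
      have := dfun_eq_zero_iff.1 h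
      rw [Sum.inr.injEq] at this
      exact hne this
    · exact h
  cases p with
  | nil => exact absurd rfl hne
  | cons hadj1 p' =>
    rename_i z1
    obtain ⟨i, u, b, rfl, hb⟩ := adj_inr_iff.1 hadj1
    have hp' : p'.length + 1 = dfun (Sum.inr l) (Sum.inr m) := by
      rw [SimpleGraph.Walk.length_cons] at htight
      omega
    have hd1 := tight_first_step hadj1 p' hp'
    exact ⟨i, u, b, hadj1, p', hb, rfl, hd1.symm⟩


lemma isVisible_symm {V : Type*} {G : SimpleGraph V} {S : Set V} {u v : V}
    (h : isVisible G S u v) : isVisible G S v u := by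
  obtain ⟨p, hpath, hlen, hsupp⟩ := h
  refine ⟨p.reverse, hpath.reverse, ?_, ?_⟩
  · rw [SimpleGraph.Walk.length_reverse, SimpleGraph.dist_comm]
    exact hlen
  · intro w hw hwS
    rw [SimpleGraph.Walk.support_reverse, List.mem_reverse] at hw
    exact (hsupp w hw hwS).symm

lemma isVisible_refl {V : Type*} {G : SimpleGraph V} {S : Set V} (u : V) :
    isVisible G S u u :=
  ⟨SimpleGraph.Walk.nil, SimpleGraph.Walk.IsPath.nil, by simp [SimpleGraph.dist_self],
    by intro w hw _; simp at hw; exact Or.inl hw⟩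

/-- extraction of the A-constraint -/
lemma extractA (ht2 : 2 ≤ t) {S : Set (gluedVert r 2 t)} (hS : isMVSet (gluedTree r 2 t) S)
    {i : Fin 2} {s s'' : {l : List (Fin t) // l.length < r}} {m : {l : List (Fin t) // l.length = r}}
    (hs : Sum.inl (i,s) ∈ S) (hs'' : Sum.inl (i,s'') ∈ S) (hm : Sum.inr m ∈ S)
    (hne : s'' ≠ s) (hc1 : lcp s.val m.val ≤ s''.val.length)
    (hc2 : s''.val <+: m.val ∨ s''.val <+: s.val) : False := by
  obtain ⟨p, hpath, hlen, hsupp⟩ := hS _ hs _ hm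
  rw [dist_eq_dfun (by omega)] at hlen
  have hbet : dfun (Sum.inl (i,s)) (Sum.inl (i,s'')) +
      dfun (Sum.inl (i,s'')) (Sum.inr m) = dfun (Sum.inl (i,s)) (Sum.inr m) := by
    rw [dfun_same]
    simp only [dfun_inl_inr]
    exact tau_between s.val m.val s''.val hc1 hc2
  have hmem := between_mem_tight_leaf (by omega) hbet p hlen
  rcases hsupp _ hmem hs'' with h | h
  · rw [Sum.inl.injEq, Prod.mk.injEq] at h
    exact hne h.2
  · simp at h

/-- extraction of the B-constraint -/
lemma extractB (ht2 : 2 ≤ t) {S : Set (gluedVert r 2 t)} (hS : isMVSet (gluedTree r 2 t) S)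
    {i : Fin 2} {s s' s'' : {l : List (Fin t) // l.length < r}}
    (hs : Sum.inl (i,s) ∈ S) (hs' : Sum.inl (i,s') ∈ S) (hs'' : Sum.inl (i,s'') ∈ S)
    (hne : s'' ≠ s) (hne' : s'' ≠ s') (hc1 : lcp s.val s'.val ≤ s''.val.length)
    (hc2 : s''.val <+: s'.val ∨ s''.val <+: s.val) : False := by
  obtain ⟨p, hpath, hlen, hsupp⟩ := hS _ hs _ hs'
  rw [dist_eq_dfun (by omega)] at hlen
  have hbet : dfun (Sum.inl (i,s)) (Sum.inl (i,s'')) +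
      dfun (Sum.inl (i,s'')) (Sum.inl (i,s')) = dfun (Sum.inl (i,s)) (Sum.inl (i,s')) := by
    rw [dfun_same, dfun_same, dfun_same]
    exact tau_between s.val s'.val s''.val hc1 hc2
  have hmem := between_mem_tight_int (by omega) hbet p hlen
  rcases hsupp _ hmem hs'' with h | h
  · rw [Sum.inl.injEq, Prod.mk.injEq] at h
    exact hne h.2
  · rw [Sum.inl.injEq, Prod.mk.injEq] at h
    exact hne' h.2

/-- extraction of the X-constraint -/
lemma extractX (ht2 : 2 ≤ t) (hr2 : 2 ≤ r) {S : Set (gluedVert r 2 t)}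
    (hS : isMVSet (gluedTree r 2 t) S)
    {sp sq : {l : List (Fin t) // l.length < r}} {l l' : {l : List (Fin t) // l.length = r}}
    (hsp : Sum.inl ((0 : Fin 2), sp) ∈ S) (hsq : Sum.inl ((1 : Fin 2), sq) ∈ S)
    (hl : Sum.inr l ∈ S) (hl' : Sum.inr l' ∈ S) (hne : l ≠ l')
    (hc1 : lcp l.val l'.val ≤ sp.val.length) (hc2 : lcp l.val l'.val ≤ sq.val.length)
    (hc3 : sp.val <+: l.val ∨ sp.val <+: l'.val)
    (hc4 : sq.val <+: l.val ∨ sq.val <+: l'.val) : False := by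
  obtain ⟨p, hpath, hlen, hsupp⟩ := hS _ hl' _ hl
  rw [dist_eq_dfun (by omega)] at hlen
  obtain ⟨i, u, b, hadj, q, hb, hpq, hqtight⟩ :=
    tight_leaf_leaf_decomp p (Ne.symm hne) hlen
  have huval : u.val = l'.val.dropLast := by
    rw [hb, List.dropLast_concat]
  -- pick the middle vertex according to the copy
  have hmain : ∀ (σ : {l : List (Fin t) // l.length < r}), Sum.inl (i, σ) ∈ S →
      lcp l.val l'.val ≤ σ.val.length → (σ.val <+: l.val ∨ σ.val <+: l'.val) → False := by
    intro σ hσS hσ1 hσ2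
    have hbet : dfun (Sum.inl (i,u)) (Sum.inl (i,σ)) +
        dfun (Sum.inl (i,σ)) (Sum.inr l) = dfun (Sum.inl (i,u)) (Sum.inr l) := by
      rw [dfun_same]
      simp only [dfun_inl_inr]
      rw [huval]
      exact tau_between_leaf r l.val l'.val σ.val hr2 l.2 l'.2
        (fun hc => hne (Subtype.ext hc)) σ.2 hσ1 hσ2
    have hmem := between_mem_tight_leaf (by omega) hbet q hqtight
    have hmem' : (Sum.inl (i, σ) : gluedVert r 2 t) ∈ p.support := by
      rw [hpq, SimpleGraph.Walk.support_cons]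
      exact List.mem_cons_of_mem _ hmem
    rcases hsupp _ hmem' hσS with h | h <;> simp at h
  by_cases hi : i = 0
  · subst hi
    exact hmain sp hsp hc1 hc3
  · have hi1 : i = 1 := by omega
    subst hi1
    exact hmain sq hsq hc2 hc4

/-- the candidate maximum sets are mutual-visibility sets -/
lemma Sv_isMV (ht2 : 2 ≤ t) (hr2 : 2 ≤ r) (iv : Fin 2) (v : {l : List (Fin t) // l.length < r}) :
    isMVSet (gluedTree r 2 t) (quasiLeaves r 2 t ∪ {Sum.inl (iv, v)}) := by
  set S : Set (gluedVert r 2 t) := quasiLeaves r 2 t ∪ {Sum.inl (iv, v)} with hSdef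
  have hmemS : ∀ x : gluedVert r 2 t, x ∈ S ↔ (∃ l, x = Sum.inr l) ∨ x = Sum.inl (iv, v) := by
    intro x
    rw [hSdef]
    simp only [quasiLeaves, Set.mem_union, Set.mem_setOf_eq, Set.mem_singleton_iff]
  -- visibility from the internal vertex to a leaf
  have hvis1 : ∀ (m : {l : List (Fin t) // l.length = r}),
      isVisible (gluedTree r 2 t) S (Sum.inl (iv, v)) (Sum.inr m) := by
    intro m
    obtain ⟨p, hp⟩ := exists_walk_dfun (r := r) (by omega : 0 < t) (Sum.inl (iv, v)) (Sum.inr m)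
    have hdist : p.length = (gluedTree r 2 t).dist (Sum.inl (iv, v)) (Sum.inr m) := by
      rw [dist_eq_dfun (by omega)]; exact hp
    refine ⟨p, p.isPath_of_length_eq_dist hdist, hdist, ?_⟩
    intro w hw hwS
    rcases tight_support_leaf p.length iv v m p rfl hp w hw with ⟨u, rfl⟩ | rfl
    · rcases (hmemS _).1 hwS with ⟨l, hl⟩ | h
      · simp at hl
      · exact Or.inl h
    · exact Or.inr rfl
  -- visibility between two distinct leaves
  have hvis2 : ∀ (l m : {l : List (Fin t) // l.length = r}), l ≠ m →
      isVisible (gluedTree r 2 t) S (Sum.inr l) (Sum.inr m) := by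
    intro l m hne
    set j : Fin 2 := if iv = 0 then 1 else 0 with hj
    have hjv : j ≠ iv := by
      rw [hj]
      by_cases h : iv = 0 <;> simp [h]
      · omega
    have hl0 : l.val ≠ [] := by
      intro hc
      have := l.2
      rw [hc] at this
      simp at this
      omega
    have hdl : l.val.dropLast.length < r := by
      have h1 := l.2
      have h2 : l.val.length ≠ 0 := fun hc => hl0 (List.length_eq_zero_iff.1 hc)
      have := List.length_dropLast (xs := l.val)
      omega
    have hadj : (gluedTree r 2 t).Adj (Sum.inr l) (Sum.inl (j, ⟨l.val.dropLast, hdl⟩)) :=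
      adj_leafparent (b := l.val.getLast hl0) (parent_decomp hl0).symm
    obtain ⟨q, hq⟩ := exists_walk_dfun (r := r) (by omega : 0 < t)
      (Sum.inl (j, ⟨l.val.dropLast, hdl⟩)) (Sum.inr m)
    have hlm : l.val ≠ m.val := fun hc => hne (Subtype.ext hc)
    have hstep : tau l.val.dropLast m.val + 1 = tau l.val m.val := by
      have hnp : ¬ (l.val.dropLast ++ [l.val.getLast hl0]) <+: m.val := by
        rw [parent_decomp hl0]
        intro hc
        have := l.2; have := m.2
        exact hlm (hc.eq_of_length (by omega))
      have h5 := tau_concat_not_prefix l.val.dropLast m.val (l.val.getLast hl0) hnp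
      rw [parent_decomp hl0] at h5
      omega
    set p := SimpleGraph.Walk.cons hadj q with hpdef
    have hplen : p.length = dfun (Sum.inr l) (Sum.inr m) := by
      rw [hpdef, SimpleGraph.Walk.length_cons, hq]
      show dfun (Sum.inl (j, ⟨l.val.dropLast, hdl⟩)) (Sum.inr m) + 1 = tau l.val m.val
      show tau l.val.dropLast m.val + 1 = tau l.val m.val
      exact hstep
    have hdist : p.length = (gluedTree r 2 t).dist (Sum.inr l) (Sum.inr m) := by
      rw [dist_eq_dfun (by omega)]; exact hplen
    refine ⟨p, p.isPath_of_length_eq_dist hdist, hdist, ?_⟩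
    intro w hw hwS
    rw [hpdef, SimpleGraph.Walk.support_cons, List.mem_cons] at hw
    rcases hw with rfl | hw
    · exact Or.inl rfl
    · rcases tight_support_leaf q.length j _ m q rfl hq w hw with ⟨u, rfl⟩ | rfl
      · rcases (hmemS _).1 hwS with ⟨l', hl'⟩ | h
        · simp at hl'
        · rw [Sum.inl.injEq, Prod.mk.injEq] at h
          exact absurd h.1 hjv
      · exact Or.inr rfl
  intro x hx y hy
  by_cases hxy : x = y
  · subst hxy; exact isVisible_refl x
  · rcases (hmemS x).1 hx with ⟨lx, rfl⟩ | rfl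
    · rcases (hmemS y).1 hy with ⟨ly, rfl⟩ | rfl
      · exact hvis2 lx ly (fun hc => hxy (by rw [hc]))
      · exact isVisible_symm (hvis1 lx)
    · rcases (hmemS y).1 hy with ⟨ly, rfl⟩ | rfl
      · exact hvis1 ly
      · exact absurd rfl hxy


def Lr (t : ℕ) : ℕ → Finset (List (Fin t))
  | 0 => {[]}
  | r+1 => Finset.univ.biUnion (fun b : Fin t => (Lr t r).image (fun m => b :: m))

lemma mem_Lr : ∀ {r : ℕ} {l : List (Fin t)}, l ∈ Lr t r ↔ l.length = r := by
  intro r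
  induction r with
  | zero =>
    intro l
    simp [Lr, List.length_eq_zero_iff]
  | succ r ih =>
    intro l
    rw [Lr]
    simp only [Finset.mem_biUnion, Finset.mem_univ, Finset.mem_image, true_and]
    constructor
    · rintro ⟨b, m, hm, rfl⟩
      simp [ih.1 hm]
    · intro h
      cases l with
      | nil => simp at h
      | cons b m =>
        refine ⟨b, m, ih.2 ?_, rfl⟩
        simpa using h

lemma card_Lr : ∀ {r : ℕ}, (Lr t r).card = t ^ r := by
  intro r
  induction r with
  | zero => simp [Lr]
  | succ r ih =>
    rw [Lr, Finset.card_biUnion]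
    · rw [Finset.sum_congr rfl (fun b _ => Finset.card_image_of_injective (Lr t r)
        (fun a c hac => by simpa using hac))]
      simp [ih, pow_succ, mul_comm]
    · intro b _ b' _ hbb
      rw [Function.onFun, Finset.disjoint_left]
      rintro l hl hl'
      obtain ⟨m, _, rfl⟩ := Finset.mem_image.1 hl
      obtain ⟨m', _, heq⟩ := Finset.mem_image.1 hl'
      rw [List.cons.injEq] at heq
      exact hbb heq.1.symm

/-- internal (length < r) lists as a Finset -/
def ILr (t r : ℕ) : Finset (List (Fin t)) := (Finset.range r).biUnion (fun d => Lr t d)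

lemma mem_ILr {l : List (Fin t)} : l ∈ ILr t r ↔ l.length < r := by
  rw [ILr]
  simp only [Finset.mem_biUnion, Finset.mem_range]
  constructor
  · rintro ⟨d, hd, hl⟩
    rw [mem_Lr.1 hl]; exact hd
  · intro h
    exact ⟨l.length, h, mem_Lr.2 rfl⟩

lemma card_ILr : (ILr t r).card = ∑ d ∈ Finset.range r, t ^ d := by
  rw [ILr, Finset.card_biUnion]
  · exact Finset.sum_congr rfl (fun d _ => card_Lr)
  · intro d _ d' _ hdd
    rw [Function.onFun, Finset.disjoint_left]
    intro l hl hl'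
    rw [mem_Lr] at hl hl'
    exact hdd (hl ▸ hl')

def leafset (t r : ℕ) (x : List (Fin t)) : Finset (List (Fin t)) :=
  (Lr t r).filter (fun l => x <+: l)

lemma mem_leafset {x l : List (Fin t)} : l ∈ leafset t r x ↔ l.length = r ∧ x <+: l := by
  rw [leafset, Finset.mem_filter, mem_Lr]

lemma leafset_subset_Lr (x : List (Fin t)) : leafset t r x ⊆ Lr t r :=
  Finset.filter_subset _ _

lemma leafset_mono {x y : List (Fin t)} (h : y <+: x) : leafset t r x ⊆ leafset t r y := by
  intro l hl
  rw [mem_leafset] at hl ⊢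
  exact ⟨hl.1, h.trans hl.2⟩

lemma prefix_total {x y l : List (Fin t)} (hx : x <+: l) (hy : y <+: l) :
    x <+: y ∨ y <+: x := by
  rcases Nat.le_total x.length y.length with h | h
  · left
    have h1 : x <+: l.take y.length := prefix_trans_take hx _ h
    rwa [← prefix_eq_take hy] at h1
  · right
    have h1 : y <+: l.take x.length := prefix_trans_take hy _ h
    rwa [← prefix_eq_take hx] at h1

lemma leafset_disj {x y : List (Fin t)} (hxy : ¬ x <+: y) (hyx : ¬ y <+: x) :
    Disjoint (leafset t r x) (leafset t r y) := by
  rw [Finset.disjoint_left]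
  intro l hl hl'
  rw [mem_leafset] at hl hl'
  rcases prefix_total hl.2 hl'.2 with h | h
  · exact hxy h
  · exact hyx h

lemma card_leafset {x : List (Fin t)} (h : x.length ≤ r) :
    (leafset t r x).card = t ^ (r - x.length) := by
  have himg : leafset t r x = (Lr t (r - x.length)).image (fun m => x ++ m) := by
    ext l
    rw [mem_leafset, Finset.mem_image]
    constructor
    · rintro ⟨h1, m, rfl⟩
      refine ⟨m, mem_Lr.2 ?_, rfl⟩
      rw [List.length_append] at h1
      omega
    · rintro ⟨m, hm, rfl⟩
      rw [mem_Lr] at hm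
      constructor
      · rw [List.length_append]; omega
      · exact ⟨m, rfl⟩
  rw [himg, Finset.card_image_of_injective _ (fun a b hab => List.append_cancel_left hab),
    card_Lr]

lemma one_le_pow (ht : 1 ≤ t) (k : ℕ) : 1 ≤ t ^ k := Nat.one_le_pow _ _ (by omega)

lemma t_le_pow (ht : 1 ≤ t) {k : ℕ} (hk : 1 ≤ k) : t ≤ t ^ k := by
  calc t = t ^ 1 := (pow_one t).symm
  _ ≤ t ^ k := Nat.pow_le_pow_right (by omega) hk

/-- disjoint union of leaf-subtrees of an antichain, counted from below -/
lemma antichain_biUnion_card (ht : 1 ≤ t)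
    (A : Finset (List (Fin t))) (hlen : ∀ a ∈ A, a.length < r)
    (hanti : ∀ a ∈ A, ∀ a' ∈ A, a ≠ a' → ¬ a <+: a') :
    t * A.card ≤ (A.biUnion (leafset t r)).card := by
  have hdisj : ∀ a ∈ A, ∀ a' ∈ A, a ≠ a' → Disjoint (leafset t r a) (leafset t r a') := by
    intro a ha a' ha' hne
    exact leafset_disj (hanti a ha a' ha' hne) (hanti a' ha' a ha hne.symm)
  rw [Finset.card_biUnion hdisj]
  calc t * A.card = A.card * t := by ring
  _ = ∑ _a ∈ A, t := by rw [Finset.sum_const, smul_eq_mul]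
  _ ≤ ∑ a ∈ A, (leafset t r a).card := by
      apply Finset.sum_le_sum
      intro a ha
      rw [card_leafset (le_of_lt (hlen a ha))]
      exact t_le_pow ht (by have := hlen a ha; omega)

lemma antichain_card_le (ht : 1 ≤ t) (y : List (Fin t))
    (A : Finset (List (Fin t))) (hA : ∀ a ∈ A, y <+: a ∧ a.length < r)
    (hanti : ∀ a ∈ A, ∀ a' ∈ A, a ≠ a' → ¬ a <+: a') :
    A.card ≤ t ^ (r - y.length - 1) := by
  rcases Finset.eq_empty_or_nonempty A with rfl | ⟨a0, ha0⟩
  · simp [one_le_pow ht]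
  · have hy : y.length < r := by
      have h1 := (hA a0 ha0).1.length_le
      have h2 := (hA a0 ha0).2
      omega
    have hsub : A.biUnion (leafset t r) ⊆ leafset t r y := by
      intro l hl
      obtain ⟨a, ha, hla⟩ := Finset.mem_biUnion.1 hl
      exact leafset_mono (hA a ha).1 hla
    have h1 := antichain_biUnion_card ht A (fun a ha => (hA a ha).2) hanti
    have h2 := Finset.card_le_card hsub
    rw [card_leafset (le_of_lt hy)] at h2
    have h3 : t ^ (r - y.length) = t * t ^ (r - y.length - 1) := by
      rw [← pow_succ']
      congr 1
      omega
    rw [h3] at h2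
    exact Nat.le_of_mul_le_mul_left (le_trans h1 h2) (by omega)

def Bfree (P : Finset (List (Fin t))) : Prop :=
  ∀ s ∈ P, ∀ s' ∈ P, ∀ s'' ∈ P, s'' ≠ s → s'' ≠ s' →
    ¬(lcp s s' ≤ s''.length ∧ (s'' <+: s ∨ s'' <+: s'))

lemma Bfree.mono {P Q : Finset (List (Fin t))} (h : Bfree P) (hQ : Q ⊆ P) : Bfree Q :=
  fun s hs s' hs' s'' hs'' h1 h2 => h s (hQ hs) s' (hQ hs') s'' (hQ hs'') h1 h2

lemma bfree_card (ht : 2 ≤ t) : ∀ (k : ℕ) (y : List (Fin t)) (P : Finset (List (Fin t))),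
    r - y.length ≤ k → (∀ p ∈ P, y <+: p ∧ p.length < r) → Bfree P →
    P.card ≤ t ^ (r - y.length - 1) := by
  intro k
  induction k with
  | zero =>
    intro y P hk hP hB
    have : P = ∅ := by
      rw [Finset.eq_empty_iff_forall_notMem]
      intro p hp
      have h1 := (hP p hp).1.length_le
      have h2 := (hP p hp).2
      omega
    subst this
    rw [Finset.card_empty]
    exact Nat.zero_le _
  | succ k ih =>
    intro y P hk hP hB
    rcases Nat.lt_or_ge y.length r with hyr | hyr
    · rcases Nat.lt_or_ge (y.length + 1) r with hyr2 | hyr2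
      · -- y.length ≤ r - 2
        classical
        set Pb : Fin t → Finset (List (Fin t)) :=
          fun b => P.filter (fun p => (y ++ [b]) <+: p) with hPb
        have hcover : ∀ p ∈ P, p ≠ y → ∃ b, p ∈ Pb b := by
          intro p hp hne
          obtain ⟨b, hb⟩ := exists_concat_prefix (hP p hp).1 (Ne.symm hne)
          exact ⟨b, Finset.mem_filter.2 ⟨hp, hb⟩⟩
        by_cases hsplit : ∃ b b', b ≠ b' ∧ (Pb b).Nonempty ∧ (Pb b').Nonempty
        · obtain ⟨b, b', hbb, ⟨pb, hpb⟩, ⟨pb', hpb'⟩⟩ := hsplit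
          rw [hPb, Finset.mem_filter] at hpb hpb'
          have hlcp : lcp pb pb' = y.length := lcp_eq_of_branch hpb.2 hpb'.2 hbb
          have hlb : y.length < pb.length := by
            have := hpb.2.length_le; simp at this; omega
          have hlb' : y.length < pb'.length := by
            have := hpb'.2.length_le; simp at this; omega
          have hyP : y ∉ P := by
            intro hy
            refine hB pb hpb.1 pb' hpb'.1 y hy ?_ ?_ ⟨by omega, Or.inl ((List.prefix_append y [b]).trans hpb.2)⟩
            · intro hc; rw [hc] at hlb; omega
            · intro hc; rw [hc] at hlb'; omega
          -- each Pb c is an antichain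
          have hanti : ∀ c, ∀ q ∈ Pb c, ∀ q' ∈ Pb c, q ≠ q' → ¬ q <+: q' := by
            intro c q hq q' hq' hne hcon
            rw [hPb, Finset.mem_filter] at hq hq'
            -- pick a witness in another subtree
            have hw : ∃ c' p'', c' ≠ c ∧ p'' ∈ P ∧ (y ++ [c']) <+: p'' := by
              by_cases hcb : c = b
              · exact ⟨b', pb', by rw [hcb]; exact hbb.symm, hpb'.1, hpb'.2⟩
              · exact ⟨b, pb, fun hc => hcb hc.symm, hpb.1, hpb.2⟩
            obtain ⟨c', p'', hc', hp''P, hp''⟩ := hw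
            have hqlen : y.length < q.length := by
              have := hq.2.length_le; simp at this; omega
            have hqne : q ≠ p'' := by
              rintro rfl
              have h2 := lcp_eq_of_branch hq.2 hp'' (fun hcc => hc' hcc.symm)
              rw [lcp_self] at h2
              omega
            have hlcp2 : lcp q' p'' = y.length := lcp_eq_of_branch hq'.2 hp'' (fun hc => hc' hc.symm)
            exact hB q' hq'.1 p'' hp''P q hq.1 hne (hqne) ⟨by omega, Or.inl hcon⟩
          have hPsub : P ⊆ Finset.univ.biUnion (fun b : Fin t => Pb b) := by
            intro p hp
            have hpy : p ≠ y := fun hc => hyP (hc ▸ hp)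
            obtain ⟨b0, hb0⟩ := hcover p hp hpy
            exact Finset.mem_biUnion.2 ⟨b0, Finset.mem_univ _, hb0⟩
          calc P.card ≤ (Finset.univ.biUnion (fun b : Fin t => Pb b)).card :=
                Finset.card_le_card hPsub
          _ ≤ ∑ b : Fin t, (Pb b).card := Finset.card_biUnion_le
          _ ≤ ∑ _b : Fin t, t ^ (r - y.length - 2) := by
              apply Finset.sum_le_sum
              intro c _
              have := antichain_card_le (by omega) (y ++ [c]) (Pb c)
                (fun p hp => by
                  rw [hPb, Finset.mem_filter] at hp
                  exact ⟨hp.2, (hP p hp.1).2⟩)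
                (hanti c)
              rw [show r - y.length - 2 = r - (y.length + 1) - 1 by omega]
              simpa using this
          _ = t * t ^ (r - y.length - 2) := by
              rw [Finset.sum_const, Finset.card_univ, Fintype.card_fin, smul_eq_mul]
          _ ≤ t ^ (r - y.length - 1) := by
              rw [← pow_succ']
              apply Nat.pow_le_pow_right (by omega)
              omega
        · push_neg at hsplit
          by_cases hocc : ∃ b0, (Pb b0).Nonempty
          · obtain ⟨b0, hb0⟩ := hocc
            have hsub : P ⊆ insert y (Pb b0) := by
              intro p hp
              by_cases hpy : p = y
              · exact Finset.mem_insert.2 (Or.inl hpy)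
              · obtain ⟨b, hb⟩ := hcover p hp hpy
                by_cases hbb0 : b = b0
                · exact Finset.mem_insert.2 (Or.inr (hbb0 ▸ hb))
                · exact absurd (hsplit b b0 hbb0 ⟨p, hb⟩) (Finset.nonempty_iff_ne_empty.1 hb0)
            have hrec := ih (y ++ [b0]) (Pb b0)
              (by simp; omega)
              (fun p hp => by
                rw [hPb, Finset.mem_filter] at hp
                exact ⟨hp.2, (hP p hp.1).2⟩)
              (hB.mono (Finset.filter_subset _ _))
            have hcard : P.card ≤ 1 + (Pb b0).card := by
              calc P.card ≤ (insert y (Pb b0)).card := Finset.card_le_card hsub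
              _ ≤ 1 + (Pb b0).card := by
                  have := Finset.card_insert_le y (Pb b0)
                  omega
            have hexp : (y ++ [b0]).length = y.length + 1 := by simp
            rw [hexp] at hrec
            have h3 : t ^ (r - y.length - 1) = t * t ^ (r - y.length - 2) := by
              rw [← pow_succ']
              congr 1
              omega
            have h4 : 1 ≤ t ^ (r - y.length - 2) := one_le_pow (by omega) _
            have h5 : 2 * t ^ (r - y.length - 2) ≤ t * t ^ (r - y.length - 2) :=
              Nat.mul_le_mul_right _ ht
            have h6 : r - (y.length + 1) - 1 = r - y.length - 2 := by omega
            rw [h6] at hrec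
            omega
          · push_neg at hocc
            have hsub : P ⊆ {y} := by
              intro p hp
              by_cases hpy : p = y
              · simp [hpy]
              · obtain ⟨b, hb⟩ := hcover p hp hpy
                exact absurd (hocc b) (Finset.nonempty_iff_ne_empty.1 ⟨p, hb⟩)
            calc P.card ≤ 1 := by
                  simpa using Finset.card_le_card hsub
            _ ≤ t ^ (r - y.length - 1) := one_le_pow (by omega) _
      · -- y.length = r - 1 : P ⊆ {y}
        have hsub : P ⊆ {y} := by
          intro p hp
          have h1 := (hP p hp).1
          have h2 := (hP p hp).2
          have h3 := h1.length_le
          rw [Finset.mem_singleton]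
          exact (h1.eq_of_length (by omega)).symm
        have : r - y.length - 1 = 0 := by omega
        rw [this, pow_zero]
        simpa using Finset.card_le_card hsub
    · -- r ≤ y.length : P = ∅
      have : P = ∅ := by
        rw [Finset.eq_empty_iff_forall_notMem]
        intro p hp
        have h1 := (hP p hp).1.length_le
        have h2 := (hP p hp).2
        omega
      subst this
      rw [Finset.card_empty]
      exact Nat.zero_le _


def Afree (P SL : Finset (List (Fin t))) : Prop :=
  ∀ s ∈ P, ∀ s'' ∈ P, ∀ l ∈ SL, s'' ≠ s →
    ¬(lcp s l ≤ s''.length ∧ (s'' <+: l ∨ s'' <+: s))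

def Xfree (P Q SL : Finset (List (Fin t))) : Prop :=
  ∀ s ∈ P, ∀ s' ∈ Q, ∀ l ∈ SL, ∀ l' ∈ SL,
    ¬(lcp l l' ≤ s.length ∧ lcp l l' ≤ s'.length ∧ (s <+: l ∨ s <+: l') ∧
      (s' <+: l ∨ s' <+: l'))

lemma pow_split (ht : 1 ≤ t) (hr : 1 ≤ r) : t ^ r = t * t ^ (r - 1) := by
  rw [← pow_succ']
  congr 1
  omega

/-- structure of a single copy: either P is a singleton with a leaf of SL below it,
or we can find many missing leaves. -/
lemma copy_cases (ht : 2 ≤ t) (hr : 2 ≤ r) (P SL : Finset (List (Fin t)))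
    (hP : ∀ p ∈ P, p.length < r) (hSL : SL ⊆ Lr t r)
    (hA : Afree P SL) (hSLne : SL.Nonempty) :
    (∃ p₀ l₀, P = {p₀} ∧ l₀ ∈ SL ∧ p₀ <+: l₀) ∨
    (∃ W, W ⊆ Lr t r ∧ Disjoint W SL ∧ t * P.card ≤ W.card) ∨
    (∃ W, W ⊆ Lr t r ∧ Disjoint W SL ∧ P.card + t ^ (r - 1) ≤ W.card) := by
  classical
  set P2 : Finset (List (Fin t)) := P.filter (fun p => ∀ l ∈ SL, ¬ p <+: l) with hP2def
  set P1 : Finset (List (Fin t)) := P \ P2 with hP1def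
  have hP2sub : P2 ⊆ P := Finset.filter_subset _ _
  have hP1mem : ∀ p ∈ P1, p ∈ P ∧ ∃ l ∈ SL, p <+: l := by
    intro p hp
    rw [hP1def, Finset.mem_sdiff, hP2def, Finset.mem_filter] at hp
    refine ⟨hp.1, ?_⟩
    by_contra hc
    push_neg at hc
    exact hp.2 ⟨hp.1, hc⟩
  have hP2mem : ∀ p ∈ P2, ∀ l ∈ SL, ¬ p <+: l := by
    intro p hp
    rw [hP2def, Finset.mem_filter] at hp
    exact hp.2
  have prefix_of_eq_take : ∀ {x y : List (Fin t)} {n : ℕ}, x = y.take n → x <+: y := by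
    intro x y n h
    rw [h]
    exact List.take_prefix _ _
  -- a P1-element is a strict prefix of every other element of P
  have key1 : ∀ p ∈ P1, ∀ q ∈ P, q ≠ p → p <+: q ∧ p.length < q.length := by
    intro p hp q hq hne
    obtain ⟨hpP, l, hl, hpl⟩ := hP1mem p hp
    have h1 := hA q hq p hpP l hl (by
      intro hc
      exact hne hc.symm)
    have h2 : ¬ lcp q l ≤ p.length := by
      intro hc
      exact h1 ⟨hc, Or.inl hpl⟩
    push_neg at h2
    have h3 : q.take p.length = l.take p.length :=
      take_eq_take_of_le_lcp p.length (by omega)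
    have h4 : p = l.take p.length := by
      have := prefix_eq_take hpl
      exact this
    have h6 := lcp_le_left q l
    constructor
    · exact prefix_of_eq_take (h4.trans h3.symm)
    · omega
  -- antichain property of P2 elements
  have key2 : ∀ p ∈ P2, ∀ q ∈ P2, q ≠ p → ¬ q <+: p := by
    intro p hp q hq hne hcon
    obtain ⟨l, hl⟩ := hSLne
    have h1 := hA p (hP2sub hp) q (hP2sub hq) l hl hne
    have h2 : ¬ lcp p l ≤ q.length := by
      intro hc
      exact h1 ⟨hc, Or.inr hcon⟩
    push_neg at h2
    have h3 : p.take q.length = l.take q.length :=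
      take_eq_take_of_le_lcp q.length (by omega)
    have h4 : q = p.take q.length := prefix_eq_take hcon
    exact hP2mem q hq l hl (prefix_of_eq_take (h4.trans h3))
  rcases Finset.eq_empty_or_nonempty P1 with hP1e | ⟨p₀, hp₀⟩
  · -- no element of P has a leaf of SL below it: P is an antichain
    have hPP2 : P = P2 := by
      apply Finset.Subset.antisymm _ hP2sub
      intro p hp
      by_contra hc
      have : p ∈ P1 := by rw [hP1def, Finset.mem_sdiff]; exact ⟨hp, hc⟩
      rw [hP1e] at this
      simp at this
    refine Or.inr (Or.inl ⟨P.biUnion (leafset t r), ?_, ?_, ?_⟩)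
    · intro l hl
      obtain ⟨p, _, hlp⟩ := Finset.mem_biUnion.1 hl
      exact leafset_subset_Lr _ hlp
    · rw [Finset.disjoint_left]
      intro l hl hlSL
      obtain ⟨p, hp, hlp⟩ := Finset.mem_biUnion.1 hl
      rw [mem_leafset] at hlp
      exact hP2mem p (hPP2 ▸ hp) l hlSL hlp.2
    · exact antichain_biUnion_card (by omega) P hP
        (fun a ha a' ha' hne => key2 a' (hPP2 ▸ ha') a (hPP2 ▸ ha) hne)
  · -- P1 = {p₀}
    have hp₀P : p₀ ∈ P := (hP1mem p₀ hp₀).1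
    obtain ⟨l₀, hl₀SL, hp₀l₀⟩ := (hP1mem p₀ hp₀).2
    have hP1sing : P1 = {p₀} := by
      rw [Finset.eq_singleton_iff_unique_mem]
      refine ⟨hp₀, ?_⟩
      intro p hp
      by_contra hne
      have h1 := key1 p hp p₀ hp₀P (Ne.symm hne)
      have h2 := key1 p₀ hp₀ p ((hP1mem p hp).1) hne
      omega
    rcases Finset.eq_empty_or_nonempty P2 with hP2e | ⟨phat, hphat⟩
    · -- P = {p₀}
      left
      refine ⟨p₀, l₀, ?_, hl₀SL, hp₀l₀⟩
      have : P1 = P := by rw [hP1def, hP2e, Finset.sdiff_empty]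
      rw [← this, hP1sing]
    · -- the big case
      right; right
      have hp₀ne : ∀ p ∈ P2, p ≠ p₀ := by
        intro p hp hc
        have : p₀ ∈ P2 := hc ▸ hp
        rw [hP1def, Finset.mem_sdiff] at hp₀
        exact hp₀.2 this
      have key3 : ∀ p ∈ P2, ∀ l ∈ SL, p₀.length < lcp p l := by
        intro p hp l hl
        have hpre := (key1 p₀ hp₀ p (hP2sub hp) (hp₀ne p hp)).1
        have h1 := hA p (hP2sub hp) p₀ hp₀P l hl (Ne.symm (hp₀ne p hp))
        by_contra hc
        push_neg at hc
        exact h1 ⟨hc, Or.inr hpre⟩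
      set ystar := l₀.take (p₀.length + 1) with hystar
      have hl₀len : l₀.length = r := mem_Lr.1 (hSL hl₀SL)
      have hp₀len : p₀.length < r := hP p₀ hp₀P
      have hylen : ystar.length = p₀.length + 1 := by
        rw [hystar, List.length_take]; omega
      have hyp : ∀ p ∈ P2, ystar <+: p := by
        intro p hp
        have h1 := key3 p hp l₀ hl₀SL
        have h2 : p.take (p₀.length+1) = l₀.take (p₀.length+1) :=
          take_eq_take_of_le_lcp _ (by omega)
        exact prefix_of_eq_take (show ystar = p.take (p₀.length+1) by rw [hystar, ← h2])
      have hySL : ∀ l ∈ SL, l ∈ leafset t r ystar := by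
        intro l hl
        have h1 := key3 phat hphat l hl
        have h2 : phat.take (p₀.length+1) = l.take (p₀.length+1) :=
          take_eq_take_of_le_lcp _ (by omega)
        have h3 : phat.take (p₀.length+1) = l₀.take (p₀.length+1) :=
          take_eq_take_of_le_lcp _ (by have := key3 phat hphat l₀ hl₀SL; omega)
        rw [mem_leafset]
        refine ⟨mem_Lr.1 (hSL hl), ?_⟩
        exact prefix_of_eq_take (show ystar = l.take (p₀.length+1) by rw [hystar, ← h3, h2])
      refine ⟨(Lr t r \ leafset t r ystar) ∪ P2.biUnion (leafset t r), ?_, ?_, ?_⟩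
      · intro l hl
        rcases Finset.mem_union.1 hl with h | h
        · exact (Finset.mem_sdiff.1 h).1
        · obtain ⟨p, _, hlp⟩ := Finset.mem_biUnion.1 h
          exact leafset_subset_Lr _ hlp
      · rw [Finset.disjoint_left]
        intro l hl hlSL
        rcases Finset.mem_union.1 hl with h | h
        · exact (Finset.mem_sdiff.1 h).2 (hySL l hlSL)
        · obtain ⟨p, hp, hlp⟩ := Finset.mem_biUnion.1 h
          exact hP2mem p hp l hlSL (mem_leafset.1 hlp).2
      · have hdisj : Disjoint (Lr t r \ leafset t r ystar) (P2.biUnion (leafset t r)) := by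
          rw [Finset.disjoint_left]
          intro l hl hl2
          obtain ⟨p, hp, hlp⟩ := Finset.mem_biUnion.1 hl2
          exact (Finset.mem_sdiff.1 hl).2 (leafset_mono (hyp p hp) hlp)
        rw [Finset.card_union_of_disjoint hdisj]
        have hc1 : (Lr t r \ leafset t r ystar).card = t ^ r - t ^ (r - (p₀.length+1)) := by
          rw [Finset.card_sdiff_of_subset (leafset_subset_Lr _), card_Lr, card_leafset (by omega), hylen]
        have hc2 : t * P2.card ≤ (P2.biUnion (leafset t r)).card :=
          antichain_biUnion_card (by omega) P2 (fun p hp => hP p (hP2sub hp))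
            (fun a ha a' ha' hne => key2 a' ha' a ha hne)
        have hcard : P.card = 1 + P2.card := by
          have h6 := Finset.card_sdiff_add_card_eq_card hP2sub
          rw [← hP1def, hP1sing] at h6
          simp at h6
          omega
        have hP2pos : 1 ≤ P2.card := Finset.card_pos.2 ⟨phat, hphat⟩
        have hpow1 : t ^ (r - (p₀.length+1)) ≤ t ^ (r-1) :=
          Nat.pow_le_pow_right (by omega) (by omega)
        have hpow3 : 1 ≤ t ^ (r-1) := one_le_pow (by omega) _
        have hpow4 : 2 * t ^ (r-1) ≤ t ^ r := by
          calc 2 * t ^ (r-1) ≤ t * t ^ (r-1) := Nat.mul_le_mul_right _ ht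
          _ = t ^ r := (pow_split (by omega) (by omega)).symm
        have hmul : 2 * P2.card ≤ t * P2.card := Nat.mul_le_mul_right _ ht
        rw [hc1]
        omega

lemma MCL (ht : 2 ≤ t) (hr : 2 ≤ r) (P Q SL : Finset (List (Fin t)))
    (hP : ∀ p ∈ P, p.length < r) (hQ : ∀ q ∈ Q, q.length < r) (hSL : SL ⊆ Lr t r)
    (hAP : Afree P SL) (hAQ : Afree Q SL) (hBP : Bfree P) (hBQ : Bfree Q)
    (hX : Xfree P Q SL) (hk : 2 ≤ P.card + Q.card) :
    P.card + Q.card + SL.card ≤ t ^ r := by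
  have hPK : P.card ≤ t ^ (r - 1) := by
    have := bfree_card ht r [] P (by simp) (fun p hp => ⟨List.nil_prefix, hP p hp⟩) hBP
    simpa using this
  have hQK : Q.card ≤ t ^ (r - 1) := by
    have := bfree_card ht r [] Q (by simp) (fun p hp => ⟨List.nil_prefix, hQ p hp⟩) hBQ
    simpa using this
  have hpow4 : 2 * t ^ (r-1) ≤ t ^ r := by
    calc 2 * t ^ (r-1) ≤ t * t ^ (r-1) := Nat.mul_le_mul_right _ ht
    _ = t ^ r := (pow_split (by omega) (by omega)).symm
  suffices h : ∃ W : Finset (List (Fin t)), W ⊆ Lr t r ∧ Disjoint W SL ∧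
      P.card + Q.card ≤ W.card by
    obtain ⟨W, hW1, hW2, hW3⟩ := h
    have hWS : W ∪ SL ⊆ Lr t r := Finset.union_subset hW1 hSL
    have hcard : W.card + SL.card ≤ t ^ r := by
      rw [← Finset.card_union_of_disjoint hW2, ← card_Lr (t := t) (r := r)]
      exact Finset.card_le_card hWS
    omega
  rcases SL.eq_empty_or_nonempty with rfl | hSLne
  · exact ⟨Lr t r, Finset.Subset.refl _, by simp, by rw [card_Lr]; omega⟩
  · have hcasesP := copy_cases ht hr P SL hP hSL hAP hSLne
    have hcasesQ := copy_cases ht hr Q SL hQ hSL hAQ hSLne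
    have hmono : ∀ (A : Finset (List (Fin t))), 1 ≤ A.card → 2 * A.card ≤ t * A.card :=
      fun A _ => Nat.mul_le_mul_right _ ht
    rcases hcasesP with ⟨p₀, lp, hPs, hlp, hplp⟩ | ⟨W, h1, h2, h3⟩ | ⟨W, h1, h2, h3⟩
    · rcases hcasesQ with ⟨q₀, lq, hQs, hlq, hqlq⟩ | ⟨W, h1, h2, h3⟩ | ⟨W, h1, h2, h3⟩
      · -- cross case: P = {p₀}, Q = {q₀}
        have hPc : P.card = 1 := by rw [hPs]; simp
        have hQc : Q.card = 1 := by rw [hQs]; simp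
        have hp₀P : p₀ ∈ P := by rw [hPs]; simp
        have hq₀Q : q₀ ∈ Q := by rw [hQs]; simp
        have hp₀len : p₀.length < r := hP p₀ hp₀P
        have hq₀len : q₀.length < r := hQ q₀ hq₀Q
        have hlplen : lp.length = r := mem_Lr.1 (hSL hlp)
        have hlqlen : lq.length = r := mem_Lr.1 (hSL hlq)
        have hX1 := hX p₀ hp₀P q₀ hq₀Q lp hlp lq hlq
        have hsplit : p₀.length < lcp lp lq ∨ q₀.length < lcp lp lq := by
          by_contra hc
          push_neg at hc
          exact hX1 ⟨hc.1, hc.2, Or.inl hplp, Or.inr hqlq⟩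
        -- get a common leaf below both
        have hcom : ∃ l0 ∈ SL, p₀ <+: l0 ∧ q₀ <+: l0 := by
          rcases hsplit with h | h
          · refine ⟨lq, hlq, ?_, hqlq⟩
            have h2 : lp.take p₀.length = lq.take p₀.length :=
              take_eq_take_of_le_lcp _ (by omega)
            have h3 : p₀ = lp.take p₀.length := prefix_eq_take hplp
            have h4 : p₀ = lq.take p₀.length := h3.trans h2
            rw [h4]
            exact List.take_prefix _ _
          · refine ⟨lp, hlp, hplp, ?_⟩
            have h2 : lp.take q₀.length = lq.take q₀.length :=
              take_eq_take_of_le_lcp _ (by omega)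
            have h3 : q₀ = lq.take q₀.length := prefix_eq_take hqlq
            have h4 : q₀ = lp.take q₀.length := h3.trans h2.symm
            rw [h4]
            exact List.take_prefix _ _
        obtain ⟨l0, hl0, hpl0, hql0⟩ := hcom
        set d := min p₀.length q₀.length with hd
        have hl0len : l0.length = r := mem_Lr.1 (hSL hl0)
        have key : ∀ l ∈ SL, d < lcp l0 l := by
          intro l hl
          have h1 := hX p₀ hp₀P q₀ hq₀Q l0 hl0 l hl
          by_contra hc
          push_neg at hc
          have hc1 : lcp l0 l ≤ p₀.length := by omega
          have hc2 : lcp l0 l ≤ q₀.length := by omega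
          exact h1 ⟨hc1, hc2, Or.inl hpl0, Or.inl hql0⟩
        set ystar := l0.take (d + 1) with hystar
        have hylen : ystar.length = d + 1 := by
          rw [hystar, List.length_take]
          omega
        have hySL : ∀ l ∈ SL, l ∈ leafset t r ystar := by
          intro l hl
          have h1 := key l hl
          have h2 : l0.take (d+1) = l.take (d+1) :=
            take_eq_take_of_le_lcp _ (by omega)
          rw [mem_leafset]
          refine ⟨mem_Lr.1 (hSL hl), ?_⟩
          have h4 : ystar = l.take (d+1) := by rw [hystar, h2]
          rw [h4]
          exact List.take_prefix _ _
        refine ⟨Lr t r \ leafset t r ystar, Finset.sdiff_subset, ?_, ?_⟩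
        · rw [Finset.disjoint_left]
          intro l hl hlSL
          exact (Finset.mem_sdiff.1 hl).2 (hySL l hlSL)
        · rw [Finset.card_sdiff_of_subset (leafset_subset_Lr _), card_Lr,
            card_leafset (by omega), hylen]
          have hpow1 : t ^ (r - (d+1)) ≤ t ^ (r-1) :=
            Nat.pow_le_pow_right (by omega) (by omega)
          have hpow3 : 2 ≤ t ^ (r-1) := le_trans ht (t_le_pow (by omega) (by omega))
          omega
      · -- Q gives antichain W
        have hQpos : 1 ≤ Q.card := by
          have hPc : P.card = 1 := by rw [hPs]; simp
          omega
        have hPc : P.card = 1 := by rw [hPs]; simp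
        exact ⟨W, h1, h2, by have := hmono Q hQpos; omega⟩
      · -- Q gives big W
        have hPc : P.card = 1 := by rw [hPs]; simp
        have hpow3 : 1 ≤ t ^ (r-1) := one_le_pow (by omega) _
        exact ⟨W, h1, h2, by omega⟩
    · rcases hcasesQ with ⟨q₀, lq, hQs, hlq, hqlq⟩ | ⟨W', h1', h2', h3'⟩ | ⟨W', h1', h2', h3'⟩
      · have hQc : Q.card = 1 := by rw [hQs]; simp
        have hPpos : 1 ≤ P.card := by omega
        exact ⟨W, h1, h2, by have := hmono P hPpos; omega⟩
      · rcases Nat.le_total P.card Q.card with hle | hle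
        · have hQpos : 1 ≤ Q.card := by omega
          exact ⟨W', h1', h2', by have := hmono Q hQpos; omega⟩
        · have hPpos : 1 ≤ P.card := by omega
          exact ⟨W, h1, h2, by have := hmono P hPpos; omega⟩
      · exact ⟨W', h1', h2', by omega⟩
    · exact ⟨W, h1, h2, by omega⟩


noncomputable instance fintypeLV : Fintype {l : List (Fin t) // l.length = r} :=
  Fintype.subtype (Lr t r) (fun _ => mem_Lr)

noncomputable instance fintypeIV : Fintype {l : List (Fin t) // l.length < r} :=
  Fintype.subtype (ILr t r) (fun _ => mem_ILr)

lemma card_LVt : Fintype.card {l : List (Fin t) // l.length = r} = t ^ r := by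
  rw [Fintype.card_of_subtype (Lr t r) (fun _ => mem_Lr), card_Lr]

lemma card_IVt : Fintype.card {l : List (Fin t) // l.length < r} =
    ∑ d ∈ Finset.range r, t ^ d := by
  rw [Fintype.card_of_subtype (ILr t r) (fun _ => mem_ILr), card_ILr]

open Classical in
noncomputable def pset (S : Set (gluedVert r 2 t)) (i : Fin 2) : Finset (List (Fin t)) :=
  (ILr t r).filter (fun x => ∃ h : x.length < r, Sum.inl (i, ⟨x, h⟩) ∈ S)

open Classical in
noncomputable def lset (S : Set (gluedVert r 2 t)) : Finset (List (Fin t)) :=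
  (Lr t r).filter (fun x => ∃ h : x.length = r, Sum.inr ⟨x, h⟩ ∈ S)

lemma mem_pset {S : Set (gluedVert r 2 t)} {i : Fin 2} {y : List (Fin t)} :
    y ∈ pset S i ↔ ∃ h : y.length < r, Sum.inl (i, ⟨y, h⟩) ∈ S := by
  classical
  rw [pset, Finset.mem_filter, mem_ILr]
  constructor
  · rintro ⟨h1, h2⟩
    convert h2
  · rintro ⟨h, hS⟩
    exact ⟨h, h, hS⟩

lemma mem_pset' {S : Set (gluedVert r 2 t)} {i : Fin 2}
    (s : {l : List (Fin t) // l.length < r}) :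
    s.val ∈ pset S i ↔ Sum.inl (i, s) ∈ S := by
  rw [mem_pset]
  constructor
  · rintro ⟨h, hS⟩
    have : (⟨s.val, h⟩ : {l : List (Fin t) // l.length < r}) = s := Subtype.ext rfl
    rwa [this] at hS
  · intro hS
    refine ⟨s.2, ?_⟩
    have : (⟨s.val, s.2⟩ : {l : List (Fin t) // l.length < r}) = s := Subtype.ext rfl
    rwa [this]

lemma mem_lset {S : Set (gluedVert r 2 t)} {y : List (Fin t)} :
    y ∈ lset S ↔ ∃ h : y.length = r, Sum.inr ⟨y, h⟩ ∈ S := by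
  classical
  rw [lset, Finset.mem_filter, mem_Lr]
  constructor
  · rintro ⟨h1, h2⟩
    convert h2
  · rintro ⟨h, hS⟩
    exact ⟨h, h, hS⟩

lemma mem_lset' {S : Set (gluedVert r 2 t)} (l : {l : List (Fin t) // l.length = r}) :
    l.val ∈ lset S ↔ Sum.inr l ∈ S := by
  rw [mem_lset]
  constructor
  · rintro ⟨h, hS⟩
    have : (⟨l.val, h⟩ : {l : List (Fin t) // l.length = r}) = l := Subtype.ext rfl
    rwa [this] at hS
  · intro hS
    refine ⟨l.2, ?_⟩
    have : (⟨l.val, l.2⟩ : {l : List (Fin t) // l.length = r}) = l := Subtype.ext rfl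
    rwa [this]

lemma lset_subset_Lr {S : Set (gluedVert r 2 t)} : lset S ⊆ Lr t r := by
  intro x hx
  obtain ⟨h, _⟩ := mem_lset.1 hx
  exact mem_Lr.2 h

lemma pset_len {S : Set (gluedVert r 2 t)} {i : Fin 2} : ∀ p ∈ pset S i, p.length < r := by
  intro p hp
  obtain ⟨h, _⟩ := mem_pset.1 hp
  exact h

/-- decomposition of the cardinality of a vertex set into its three parts -/
lemma ncard_decomp (S : Set (gluedVert r 2 t)) :
    S.ncard = (pset S 0).card + (pset S 1).card + (lset S).card := by
  classical
  have hfin : S.Finite := S.toFinite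
  rw [Set.ncard_eq_toFinset_card _ hfin]
  set F := hfin.toFinset with hF
  have hmemF : ∀ x, x ∈ F ↔ x ∈ S := fun x => Set.Finite.mem_toFinset hfin
  set p0 : gluedVert r 2 t → Prop := fun x => ∃ s, x = Sum.inl ((0 : Fin 2), s) with hp0
  set p1 : gluedVert r 2 t → Prop := fun x => ∃ s, x = Sum.inl ((1 : Fin 2), s) with hp1
  have hcard0 : (F.filter p0).card = (pset S 0).card := by
    apply Finset.card_bij (fun a _ => match a with
      | Sum.inl (_, s) => s.val
      | Sum.inr l => l.val)
    · intro a ha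
      rw [Finset.mem_filter] at ha
      obtain ⟨s, rfl⟩ := ha.2
      exact (mem_pset' s).2 ((hmemF _).1 ha.1)
    · intro a ha b hb hab
      rw [Finset.mem_filter] at ha hb
      obtain ⟨s, rfl⟩ := ha.2
      obtain ⟨s', rfl⟩ := hb.2
      simp only at hab
      rw [Sum.inl.injEq, Prod.mk.injEq]
      exact ⟨rfl, Subtype.ext hab⟩
    · intro y hy
      obtain ⟨h, hS⟩ := mem_pset.1 hy
      exact ⟨Sum.inl ((0 : Fin 2), ⟨y, h⟩), Finset.mem_filter.2 ⟨(hmemF _).2 hS, ⟨_, rfl⟩⟩, rfl⟩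
  have hcard1 : (F.filter p1).card = (pset S 1).card := by
    apply Finset.card_bij (fun a _ => match a with
      | Sum.inl (_, s) => s.val
      | Sum.inr l => l.val)
    · intro a ha
      rw [Finset.mem_filter] at ha
      obtain ⟨s, rfl⟩ := ha.2
      exact (mem_pset' s).2 ((hmemF _).1 ha.1)
    · intro a ha b hb hab
      rw [Finset.mem_filter] at ha hb
      obtain ⟨s, rfl⟩ := ha.2
      obtain ⟨s', rfl⟩ := hb.2
      simp only at hab
      rw [Sum.inl.injEq, Prod.mk.injEq]
      exact ⟨rfl, Subtype.ext hab⟩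
    · intro y hy
      obtain ⟨h, hS⟩ := mem_pset.1 hy
      exact ⟨Sum.inl ((1 : Fin 2), ⟨y, h⟩), Finset.mem_filter.2 ⟨(hmemF _).2 hS, ⟨_, rfl⟩⟩, rfl⟩
  have hcardL : (F.filter (fun x => ¬ p0 x ∧ ¬ p1 x)).card = (lset S).card := by
    apply Finset.card_bij (fun a _ => match a with
      | Sum.inl (_, s) => s.val
      | Sum.inr l => l.val)
    · intro a ha
      rw [Finset.mem_filter] at ha
      rcases a with ⟨i, s⟩ | l
      · exfalso
        have : i = 0 ∨ i = 1 := by omega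
        rcases this with rfl | rfl
        · exact ha.2.1 ⟨s, rfl⟩
        · exact ha.2.2 ⟨s, rfl⟩
      · exact (mem_lset' l).2 ((hmemF _).1 ha.1)
    · intro a ha b hb hab
      rw [Finset.mem_filter] at ha hb
      rcases a with ⟨i, s⟩ | l
      · exfalso
        have : i = 0 ∨ i = 1 := by omega
        rcases this with rfl | rfl
        · exact ha.2.1 ⟨s, rfl⟩
        · exact ha.2.2 ⟨s, rfl⟩
      · rcases b with ⟨i, s⟩ | m
        · exfalso
          have : i = 0 ∨ i = 1 := by omega
          rcases this with rfl | rfl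
          · exact hb.2.1 ⟨s, rfl⟩
          · exact hb.2.2 ⟨s, rfl⟩
        · simp only at hab
          rw [Sum.inr.injEq]
          exact Subtype.ext hab
    · intro y hy
      obtain ⟨h, hS⟩ := mem_lset.1 hy
      refine ⟨Sum.inr ⟨y, h⟩, Finset.mem_filter.2 ⟨(hmemF _).2 hS, ?_, ?_⟩, rfl⟩
      · rintro ⟨s, hs⟩; simp at hs
      · rintro ⟨s, hs⟩; simp at hs
  have hsplit1 := Finset.card_filter_add_card_filter_not (s := F) (p := p0)
  have hsplit2 := Finset.card_filter_add_card_filter_not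
    (s := F.filter (fun x => ¬ p0 x)) (p := p1)
  have he1 : (F.filter (fun x => ¬ p0 x)).filter p1 = F.filter p1 := by
    rw [Finset.filter_filter]
    apply Finset.filter_congr
    intro x _
    constructor
    · rintro ⟨_, h⟩; exact h
    · intro h
      refine ⟨?_, h⟩
      obtain ⟨s, rfl⟩ := h
      rintro ⟨s', hs'⟩
      rw [Sum.inl.injEq, Prod.mk.injEq] at hs'
      exact absurd hs'.1 (by omega)
  have he2 : (F.filter (fun x => ¬ p0 x)).filter (fun x => ¬ p1 x) =
      F.filter (fun x => ¬ p0 x ∧ ¬ p1 x) := by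
    rw [Finset.filter_filter]
  rw [he1, he2] at hsplit2
  omega


/-- upper bound: every MV set has at most t^r+1 vertices; moreover if it has
two or more internal vertices it has at most t^r. -/
lemma mv_bound (ht2 : 2 ≤ t) (hr2 : 2 ≤ r) (S : Set (gluedVert r 2 t))
    (hS : isMVSet (gluedTree r 2 t) S) :
    ((pset S 0).card + (pset S 1).card ≤ 1 ∧ S.ncard ≤ t ^ r + 1) ∨
    (2 ≤ (pset S 0).card + (pset S 1).card ∧ S.ncard ≤ t ^ r) := by
  classical
  have hlenP : ∀ (i : Fin 2), ∀ p ∈ pset S i, p.length < r := by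
    intro i p hp
    obtain ⟨h, _⟩ := mem_pset.1 hp
    exact h
  have hLsub : lset S ⊆ Lr t r := lset_subset_Lr
  have hAf : ∀ i : Fin 2, Afree (pset S i) (lset S) := by
    intro i s hs s'' hs'' l hl hne ⟨hc1, hc2⟩
    obtain ⟨h1, hS1⟩ := mem_pset.1 hs
    obtain ⟨h2, hS2⟩ := mem_pset.1 hs''
    obtain ⟨h3, hS3⟩ := mem_lset.1 hl
    exact extractA ht2 hS hS1 hS2 hS3
      (fun hc => hne (congrArg Subtype.val hc)) hc1 hc2
  have hBf : ∀ i : Fin 2, Bfree (pset S i) := by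
    intro i s hs s' hs' s'' hs'' hne hne' ⟨hc1, hc2⟩
    obtain ⟨h1, hS1⟩ := mem_pset.1 hs
    obtain ⟨h2, hS2⟩ := mem_pset.1 hs'
    obtain ⟨h3, hS3⟩ := mem_pset.1 hs''
    by_cases hss : s = s'
    · subst hss
      rw [lcp_self] at hc1
      have hpre : s'' <+: s := by tauto
      have := hpre.length_le
      exact hne (hpre.eq_of_length (by omega))
    · exact extractB ht2 hS hS1 hS2 hS3
        (fun hc => hne (congrArg Subtype.val hc))
        (fun hc => hne' (congrArg Subtype.val hc)) hc1 (Or.symm hc2)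
  have hXf : Xfree (pset S 0) (pset S 1) (lset S) := by
    intro s hs s' hs' l hl l' hl' ⟨hc1, hc2, hc3, hc4⟩
    obtain ⟨h1, hS1⟩ := mem_pset.1 hs
    obtain ⟨h2, hS2⟩ := mem_pset.1 hs'
    obtain ⟨h3, hS3⟩ := mem_lset.1 hl
    obtain ⟨h4, hS4⟩ := mem_lset.1 hl'
    by_cases hll : l = l'
    · subst hll
      rw [lcp_self] at hc1
      omega
    · refine extractX ht2 hr2 hS hS1 hS2 hS3 hS4 ?_ hc1 hc2 hc3 hc4
      intro hc
      rw [Subtype.mk.injEq] at hc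
      exact hll hc
  rw [ncard_decomp S]
  by_cases hk : 2 ≤ (pset S 0).card + (pset S 1).card
  · right
    exact ⟨hk, MCL ht2 hr2 _ _ _ (hlenP 0) (hlenP 1) hLsub (hAf 0) (hAf 1)
      (hBf 0) (hBf 1) hXf hk⟩
  · left
    have hL : (lset S).card ≤ t ^ r := by
      have := Finset.card_le_card hLsub
      rwa [card_Lr] at this
    omega

lemma mv_ncard_le (ht2 : 2 ≤ t) (hr2 : 2 ≤ r) (S : Set (gluedVert r 2 t))
    (hS : isMVSet (gluedTree r 2 t) S) : S.ncard ≤ t ^ r + 1 := by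
  rcases mv_bound ht2 hr2 S hS with ⟨_, h⟩ | ⟨_, h⟩ <;> omega

/-- cardinality of the candidate maximum sets -/
lemma Sv_ncard (hr0 : 0 < r) (iv : Fin 2) (v : {l : List (Fin t) // l.length < r}) :
    (quasiLeaves r 2 t ∪ {Sum.inl (iv, v)} : Set (gluedVert r 2 t)).ncard = t ^ r + 1 := by
  classical
  set S : Set (gluedVert r 2 t) := quasiLeaves r 2 t ∪ {Sum.inl (iv, v)} with hSdef
  have hmemS : ∀ x : gluedVert r 2 t, x ∈ S ↔ (∃ l, x = Sum.inr l) ∨ x = Sum.inl (iv, v) := by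
    intro x
    rw [hSdef]
    simp only [quasiLeaves, Set.mem_union, Set.mem_setOf_eq, Set.mem_singleton_iff]
  have hlset : lset S = Lr t r := by
    apply Finset.Subset.antisymm lset_subset_Lr
    intro y hy
    exact mem_lset.2 ⟨mem_Lr.1 hy, (hmemS _).2 (Or.inl ⟨_, rfl⟩)⟩
  have hpset : ∀ i : Fin 2, pset S i = if i = iv then {v.val} else ∅ := by
    intro i
    ext y
    rw [mem_pset]
    constructor
    · rintro ⟨h, hS'⟩
      rcases (hmemS _).1 hS' with ⟨l, hl⟩ | heq
      · simp at hl
      · rw [Sum.inl.injEq, Prod.mk.injEq] at heq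
        rw [heq.1, if_pos rfl, Finset.mem_singleton, ← heq.2]
    · intro hy
      by_cases hiv : i = iv
      · rw [if_pos hiv, Finset.mem_singleton] at hy
        subst hiv hy
        exact ⟨v.2, (hmemS _).2 (Or.inr (by congr))⟩
      · rw [if_neg hiv] at hy
        simp at hy
  rw [ncard_decomp S, hlset, card_Lr]
  have h0 := hpset 0
  have h1 := hpset 1
  by_cases hiv : iv = 0
  · subst hiv
    rw [if_pos rfl] at h0
    rw [if_neg (by omega)] at h1
    rw [h0, h1]
    simp
    omega
  · have hiv1 : iv = 1 := by omega
    subst hiv1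
    rw [if_neg (by omega)] at h0
    rw [if_pos rfl] at h1
    rw [h0, h1]
    simp
    omega

/-- classification of maximum MV sets -/
lemma max_classify (ht2 : 2 ≤ t) (hr2 : 2 ≤ r) (S : Set (gluedVert r 2 t))
    (hS : isMVSet (gluedTree r 2 t) S) (hcard : S.ncard = t ^ r + 1) :
    ∃ x : Fin 2 × {l : List (Fin t) // l.length < r},
      S = quasiLeaves r 2 t ∪ {Sum.inl x} := by
  classical
  have hdec := ncard_decomp S
  rcases mv_bound ht2 hr2 S hS with ⟨hk, _⟩ | ⟨_, hle⟩
  swap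
  · omega
  have hLsub : lset S ⊆ Lr t r := lset_subset_Lr
  have hLle : (lset S).card ≤ t ^ r := by
    have := Finset.card_le_card hLsub
    rwa [card_Lr] at this
  have hk1 : (pset S 0).card + (pset S 1).card = 1 := by omega
  have hLall : lset S = Lr t r := by
    apply Finset.eq_of_subset_of_card_le hLsub
    rw [card_Lr]
    omega
  -- extract the unique internal vertex
  have hone : ∃ (i : Fin 2) (w : List (Fin t)), pset S i = {w} ∧
      pset S (if i = 0 then 1 else 0) = ∅ := by
    rcases Nat.eq_zero_or_pos (pset S 0).card with h0 | h0
    · have h1 : (pset S 1).card = 1 := by omega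
      obtain ⟨w, hw⟩ := Finset.card_eq_one.1 h1
      exact ⟨1, w, hw, by simp; exact Finset.card_eq_zero.1 h0⟩
    · have h0' : (pset S 0).card = 1 := by omega
      obtain ⟨w, hw⟩ := Finset.card_eq_one.1 h0'
      refine ⟨0, w, hw, by simp; exact Finset.card_eq_zero.1 (by omega)⟩
  obtain ⟨i, w, hwP, hother⟩ := hone
  have hwmem : w ∈ pset S i := by rw [hwP]; exact Finset.mem_singleton_self w
  obtain ⟨hwlen, hwS⟩ := mem_pset.1 hwmem
  refine ⟨(i, ⟨w, hwlen⟩), ?_⟩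
  ext x
  simp only [quasiLeaves, Set.mem_union, Set.mem_setOf_eq, Set.mem_singleton_iff]
  constructor
  · intro hx
    rcases x with ⟨j, s⟩ | l
    · right
      have hsj : s.val ∈ pset S j := (mem_pset' s).2 hx
      by_cases hji : j = i
      · subst hji
        rw [hwP, Finset.mem_singleton] at hsj
        rw [Sum.inl.injEq, Prod.mk.injEq]
        exact ⟨rfl, Subtype.ext hsj⟩
      · exfalso
        have hj' : j = if i = 0 then 1 else 0 := by
          by_cases hi0 : i = 0 <;> simp [hi0] <;> omega
        rw [hj', hother] at hsj
        simp at hsj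
    · exact Or.inl ⟨l, rfl⟩
  · intro hx
    rcases hx with ⟨l, rfl⟩ | rfl
    · have : l.val ∈ lset S := by rw [hLall, mem_Lr]; exact l.2
      exact (mem_lset' l).1 this
    · exact hwS

lemma geom_mul (ht1 : 1 ≤ t) : ∀ (n : ℕ), (∑ d ∈ Finset.range n, t ^ d) * (t - 1) = t ^ n - 1 := by
  intro n
  induction n with
  | zero => simp
  | succ n ih =>
    rw [Finset.sum_range_succ, Nat.add_mul, ih]
    have h1 : t ^ n * (t - 1) = t ^ (n+1) - t ^ n := by
      rw [Nat.mul_sub_one, ← pow_succ]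
    have h2 : 1 ≤ t ^ n := one_le_pow ht1 n
    have h3 : t ^ n ≤ t ^ (n + 1) := Nat.pow_le_pow_right (by omega) (by omega)
    omega

lemma geom_div (ht2 : 2 ≤ t) : (t ^ r - 1) / (t - 1) = ∑ d ∈ Finset.range r, t ^ d :=
  Nat.div_eq_of_eq_mul_left (by omega) (by rw [← geom_mul (by omega) r])


end GTP

theorem stmt17 (r t : ℕ) (hr : 2 ≤ r) (ht : 2 ≤ t) :
    IsGreatest {k : ℕ | ∃ S : Set (gluedVert r 2 t),
      isMVSet (gluedTree r 2 t) S ∧ S.ncard = k} (t ^ r + 1) ∧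
    {S : Set (gluedVert r 2 t) | isMVSet (gluedTree r 2 t) S ∧
        ∀ T : Set (gluedVert r 2 t), isMVSet (gluedTree r 2 t) T → T.ncard ≤ S.ncard}.ncard
      = 2 * ((t ^ r - 1) / (t - 1)) := by
  classical
  have hr0 : (0 : ℕ) < r := by omega
  constructor
  · constructor
    · exact ⟨quasiLeaves r 2 t ∪ {Sum.inl ((0 : Fin 2), ⟨[], by simp; omega⟩)},
        GTP.Sv_isMV ht hr _ _, GTP.Sv_ncard hr0 _ _⟩
    · rintro k ⟨S, hS, rfl⟩
      exact GTP.mv_ncard_le ht hr S hS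
  · have hinj : Function.Injective
        (fun x : Fin 2 × {l : List (Fin t) // l.length < r} =>
          (quasiLeaves r 2 t ∪ {Sum.inl x} : Set (gluedVert r 2 t))) := by
      intro x y h
      have h2 : (quasiLeaves r 2 t ∪ {Sum.inl x} : Set (gluedVert r 2 t)) =
          quasiLeaves r 2 t ∪ {Sum.inl y} := h
      have hx : (Sum.inl x : gluedVert r 2 t) ∈ quasiLeaves r 2 t ∪ {Sum.inl y} := by
        rw [← h2]
        exact Set.mem_union_right _ rfl
      rw [Set.mem_union] at hx
      rcases hx with hx | hx
      · obtain ⟨l, hl⟩ := hx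
        simp at hl
      · rw [Set.mem_singleton_iff, Sum.inl.injEq] at hx
        exact hx
    have hset : {S : Set (gluedVert r 2 t) | isMVSet (gluedTree r 2 t) S ∧
        ∀ T : Set (gluedVert r 2 t), isMVSet (gluedTree r 2 t) T → T.ncard ≤ S.ncard} =
        (fun x : Fin 2 × {l : List (Fin t) // l.length < r} =>
          (quasiLeaves r 2 t ∪ {Sum.inl x} : Set (gluedVert r 2 t))) '' Set.univ := by
      ext S
      simp only [Set.mem_setOf_eq, Set.mem_image, Set.mem_univ, true_and]
      constructor
      · rintro ⟨hS, hmax⟩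
        have h1 : t ^ r + 1 ≤ S.ncard := by
          have h2 := hmax (quasiLeaves r 2 t ∪ {Sum.inl ((0 : Fin 2), ⟨[], by simp; omega⟩)})
            (GTP.Sv_isMV ht hr _ _)
          rwa [GTP.Sv_ncard hr0] at h2
        have h2 := GTP.mv_ncard_le ht hr S hS
        obtain ⟨x, hx⟩ := GTP.max_classify ht hr S hS (by omega)
        exact ⟨x, hx.symm⟩
      · rintro ⟨⟨i, v⟩, rfl⟩
        refine ⟨GTP.Sv_isMV ht hr i v, ?_⟩
        intro T hT
        rw [GTP.Sv_ncard hr0]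
        exact GTP.mv_ncard_le ht hr T hT
    rw [hset, Set.ncard_image_of_injective _ hinj, Set.ncard_univ,
      Nat.card_eq_fintype_card, Fintype.card_prod, Fintype.card_fin, GTP.card_IVt,
      GTP.geom_div ht]
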